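/- arXiv:1911.03119 — 3 statements merged into one kernel-verified Lean document; each statement's English description precedes it below -/
import Mathlib

section
/- For every n ≥ 0 and every Dyck path P in D_n^{h,≥}, the length of φ(P) equals n (equivalently, φ maps D_n^{h,≥} into the set of Motzkin paths of length n), and φ is a bijection from D_n^{h,≥} to the set M_n of Motzkin paths of length n. -/
inductive Step : Type
  | U | D | F
  deriving DecidableEq, Repr

open Step

/-- Number of occurrences of `p` as a factor (consecutive steps) of `w`. -/
def countFactor (p w : List Step) : ℕ :=
  w.tails.countP fun t => p.isPrefixOf t

/-- `w` is a Dyck path (word over {U,D} with as many U's as D's,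
every prefix having at least as many U's as D's). -/
def IsDyck (w : List Step) : Prop :=
  w.count F = 0 ∧ w.count U = w.count D ∧
    ∀ p : List Step, p <+: w → p.count D ≤ p.count U

/-- `w` is a Motzkin path. -/
def IsMotzkin (w : List Step) : Prop :=
  w.count U = w.count D ∧ ∀ p : List Step, p <+: w → p.count D ≤ p.count U

/-- The (maximal) height of a path. -/
def height (w : List Step) : ℕ :=
  (w.inits.map fun p => p.count U - p.count D).foldr max 0

/-- The set `D^{h,≥}` of Dyck paths with first return decomposition
`P = U α D β` satisfying `h(UαD) ≥ h(β)`, recursively. -/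
inductive DH : List Step → Prop
  | nil : DH []
  | cons (α β : List Step) : DH α → DH β →
      height (U :: (α ++ [D])) ≥ height β → DH (U :: (α ++ [D] ++ β))

/-- The map φ from `D^{h,≥}` to Motzkin paths, as a relation:
φ(ε)=ε, φ(αUD)=φ(α)F, φ(αUUβDγD)=φ(α)φ(γ)Uφ(β)D. -/
inductive Phi : List Step → List Step → Prop
  | nil : Phi [] []
  | flat (α a : List Step) : DH α → Phi α a →
      Phi (α ++ [U, D]) (a ++ [F])
  | up (α β γ a b c : List Step) : DH α → DH β → DH γ →
      Phi α a → Phi β b → Phi γ c →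
      Phi (α ++ [U, U] ++ β ++ [D] ++ γ ++ [D]) (a ++ c ++ U :: (b ++ [D]))

/-- Auxiliary: the list starts with one or more `F`'s followed by a `D`. -/
def fThenD : List Step → Bool
  | F :: D :: _ => true
  | F :: rest => fThenD rest
  | _ => false

/-- Auxiliary: the list starts with one or more `F`'s followed by a `U`. -/
def fThenU : List Step → Bool
  | F :: U :: _ => true
  | F :: rest => fThenU rest
  | _ => false

/-- Number of occurrences of factors of the form `U F^k D` with `k ≥ 1` in `w`. -/
def countUFD (w : List Step) : ℕ :=
  w.tails.countP fun t => match t with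
    | U :: rest => fThenD rest
    | _ => false

/-- Number of occurrences of factors of the form `U F^k U` with `k ≥ 1` in `w`. -/
def countUFU (w : List Step) : ℕ :=
  w.tails.countP fun t => match t with
    | U :: rest => fThenU rest
    | _ => false

namespace Bij

/-! ### Basic abbreviations -/

def Bal (w : List Step) : Prop := w.count U = w.count D
def Nn (w : List Step) : Prop := ∀ p : List Step, p <+: w → p.count D ≤ p.count U

lemma bal_append {x y : List Step} (hx : Bal x) (hy : Bal y) : Bal (x ++ y) := by
  simp [Bal, List.count_append] at *; omega

lemma bal_of_append {x y : List Step} (h : Bal (x ++ y)) (hx : Bal x) : Bal y := by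
  simp [Bal, List.count_append] at *; omega

lemma bal_of_append' {x y : List Step} (h : Bal (x ++ y)) (hy : Bal y) : Bal x := by
  simp [Bal, List.count_append] at *; omega

lemma prefix_append_cases {p x y : List Step} (h : p <+: x ++ y) :
    p <+: x ∨ ∃ q, q <+: y ∧ p = x ++ q := by
  rcases h with ⟨t, ht⟩
  rcases List.append_eq_append_iff.1 ht with ⟨a', h1, _⟩ | ⟨c', h1, h2⟩
  · exact Or.inl ⟨a', h1.symm⟩
  · exact Or.inr ⟨c', ⟨t, h2.symm⟩, h1⟩

lemma prefix_short {p x y : List Step} (h : p <+: x ++ y) (hl : p.length ≤ x.length) :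
    p <+: x := by
  rcases prefix_append_cases h with h' | ⟨q, _, rfl⟩
  · exact h'
  · simp at hl
    subst hl
    simp

lemma pal {x p y : List Step} (hp : p <+: y) : x ++ p <+: x ++ y := by
  rcases hp with ⟨t, ht⟩
  exact ⟨t, by simp [← ht]⟩

lemma nn_prefix {x y : List Step} (h : Nn (x ++ y)) : Nn x :=
  fun p hp => h p (hp.trans (List.prefix_append x y))

lemma nn_of_append {x y : List Step} (h : Nn (x ++ y)) (hx : Bal x) : Nn y := by
  intro p hp
  have := h (x ++ p) ((pal hp))
  simp [List.count_append] at this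
  simp [Bal] at hx; omega

lemma nn_append {x y : List Step} (hx : Nn x) (hb : Bal x) (hy : Nn y) : Nn (x ++ y) := by
  intro p hp
  rcases prefix_append_cases hp with h' | ⟨q, hq, rfl⟩
  · exact hx p h'
  · have := hy q hq
    simp [Bal] at hb
    simp [List.count_append]; omega

/-! ### foldr max and height -/

lemma le_fold {l : List ℕ} {x : ℕ} (h : x ∈ l) : x ≤ l.foldr max 0 := by
  induction l with
  | nil => simp at h
  | cons a l ih =>
    rcases List.mem_cons.1 h with rfl | h'
    · exact Nat.le_max_left _ _ |>.trans_eq rfl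
    · exact le_trans (ih h') (Nat.le_max_right _ _)

lemma fold_le {l : List ℕ} {h : ℕ} (hall : ∀ x ∈ l, x ≤ h) : l.foldr max 0 ≤ h := by
  induction l with
  | nil => simpa using Nat.zero_le h
  | cons a l ih =>
    simp only [List.foldr_cons]
    exact max_le (hall a (by simp)) (ih fun x hx => hall x (by simp [hx]))

lemma fold_attain (l : List ℕ) : l.foldr max 0 = 0 ∨ l.foldr max 0 ∈ l := by
  induction l with
  | nil => simp
  | cons a l ih =>
    simp only [List.foldr_cons]
    rcases Nat.le_total a (l.foldr max 0) with h | h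
    · rw [max_eq_right h]
      rcases ih with h' | h'
      · exact Or.inl h'
      · exact Or.inr (by simp [h'])
    · rw [max_eq_left h]
      exact Or.inr (by simp)

lemma height_le {w : List Step} {h : ℕ}
    (hall : ∀ p : List Step, p <+: w → p.count U - p.count D ≤ h) : height w ≤ h := by
  apply fold_le
  intro x hx
  rcases List.mem_map.1 hx with ⟨p, hp, rfl⟩
  exact hall p ((List.mem_inits _ _).1 hp)

lemma le_height {w p : List Step} (hp : p <+: w) : p.count U - p.count D ≤ height w :=
  le_fold (List.mem_map.2 ⟨p, (List.mem_inits _ _).2 hp, rfl⟩)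

lemma height_attain (w : List Step) :
    height w = 0 ∨ ∃ p, p <+: w ∧ height w = p.count U - p.count D := by
  rcases fold_attain ((w.inits.map fun p => p.count U - p.count D)) with h | h
  · exact Or.inl h
  · rcases List.mem_map.1 h with ⟨p, hp, he⟩
    exact Or.inr ⟨p, (List.mem_inits _ _).1 hp, he.symm⟩

lemma height_mono {x w : List Step} (h : x <+: w) : height x ≤ height w :=
  height_le fun p hp => le_height (hp.trans h)

@[simp] lemma height_nil : height ([] : List Step) = 0 := rfl

lemma height_append {x y : List Step} (hx : Bal x) :
    height (x ++ y) = max (height x) (height y) := by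
  apply le_antisymm
  · apply height_le
    intro p hp
    rcases prefix_append_cases hp with h' | ⟨q, hq, rfl⟩
    · exact le_trans (le_height h') (le_max_left _ _)
    · have := le_height hq
      simp [Bal] at hx
      simp [List.count_append]
      omega
  · apply max_le (height_mono (List.prefix_append x y))
    apply height_le
    intro p hp
    have := le_height (pal (x := x) hp)
    simp [Bal] at hx
    simp [List.count_append] at this
    omega

lemma height_wrap {w : List Step} (hw : Nn w) :
    height (U :: (w ++ [D])) = height w + 1 := by
  apply le_antisymm
  · apply height_le
    intro p hp
    match p, hp with
    | [], _ => simp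
    | U :: q, hq =>
      have hq' : q <+: w ++ [D] := by
        rcases hq with ⟨t, ht⟩
        exact ⟨t, by simpa using ht⟩
      rcases prefix_append_cases hq' with h' | ⟨r, hr, rfl⟩
      · have h1 := le_height h'
        have h2 := hw q h'
        simp [List.count_cons]
        omega
      · have hr' : r = [] ∨ r = [D] := by
          rcases hr with ⟨t, ht⟩
          match r, t, ht with
          | [], _, _ => exact Or.inl rfl
          | [D], [], _ => exact Or.inr rfl
        have h1 := le_height (List.prefix_refl w)
        have h2 := hw w (List.prefix_refl w)
        rcases hr' with rfl | rfl <;> simp [List.count_cons, List.count_append] <;> omega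
    | D :: q, hq => obtain ⟨t, ht⟩ := hq; simp at ht
    | F :: q, hq => obtain ⟨t, ht⟩ := hq; simp at ht
  · rcases height_attain w with h0 | ⟨p, hp, he⟩
    · rw [h0]
      have : (1:ℕ) = (([U]:List Step).count U - ([U]:List Step).count D) := by simp
      calc (0:ℕ) + 1 = 1 := by omega
        _ ≤ _ := by
          rw [this]
          exact le_height ⟨w ++ [D], rfl⟩
    · have hple : (U :: p) <+: U :: (w ++ [D]) := by
        rcases hp with ⟨t, ht⟩
        exact ⟨t ++ [D], by simp [← ht]⟩
      have h1 := le_height hple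
      have h2 := hw p hp
      simp [List.count_cons] at h1
      omega


/-! ### wrap lemmas and uniqueness of decompositions -/

lemma bal_wrap {a b : List Step} (ha : Bal a) (hb : Bal b) : Bal (U :: (a ++ [D] ++ b)) := by
  simp [Bal, List.count_append, List.count_cons] at *; omega

lemma nn_wrap {a b : List Step} (ha : Nn a) (hba : Bal a) (hb : Nn b) :
    Nn (U :: (a ++ [D] ++ b)) := by
  intro p hp
  match p, hp with
  | [], _ => simp
  | U :: q, hq =>
    have hq' : q <+: a ++ [D] ++ b := by
      rcases hq with ⟨t, ht⟩; exact ⟨t, by simpa using ht⟩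
    rcases prefix_append_cases (y := b) hq' with h' | ⟨r, hr, rfl⟩
    · rcases prefix_append_cases h' with h'' | ⟨r, hr, rfl⟩
      · have := ha q h''
        simp [List.count_cons]; omega
      · have hr' : r = [] ∨ r = [D] := by
          rcases hr with ⟨t, ht⟩
          match r, t, ht with
          | [], _, _ => exact Or.inl rfl
          | [D], [], _ => exact Or.inr rfl
        have := ha a (List.prefix_refl a)
        simp [Bal] at hba
        rcases hr' with rfl | rfl <;> simp [List.count_cons, List.count_append] <;> omega
    · have := hb r hr
      simp [Bal] at hba
      simp [List.count_cons, List.count_append]; omega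
  | D :: q, hq => obtain ⟨t, ht⟩ := hq; simp at ht
  | F :: q, hq => obtain ⟨t, ht⟩ := hq; simp at ht

lemma ge_one_wrap {a b : List Step} : 1 ≤ height (U :: (a ++ [D] ++ b)) := by
  have := le_height (w := U :: (a ++ [D] ++ b)) (p := [U]) ⟨a ++ [D] ++ b, rfl⟩
  simpa using this

lemma lbu_aux {x x' i i' : List Step} (h : x ++ (U :: (i ++ [D])) = x' ++ (U :: (i' ++ [D])))
    (hx : Bal x) (hx' : Bal x') (hi : Nn i) (hl : x.length ≤ x'.length) :
    x = x' ∧ i = i' := by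
  rcases List.append_eq_append_iff.1 h with ⟨w, hw1, hw2⟩ | ⟨w, hw1, hw2⟩
  · -- x' = x ++ w, U::(i++[D]) = w ++ (U::(i'++[D]))
    have hbw : Bal w := bal_of_append (hw1 ▸ hx') hx
    match w, hw2 with
    | [], hw2 =>
      simp only [List.nil_append] at hw1 hw2
      refine ⟨by simp [hw1], ?_⟩
      have h2 : i ++ [D] = i' ++ [D] := by simpa using hw2
      exact (List.append_inj' h2 rfl).1
    | U :: w', hw2 =>
      exfalso
      have hw2' : i ++ [D] = w' ++ (U :: (i' ++ [D])) := by
        have := congrArg List.tail hw2; simpa using this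
      have hlen : w'.length ≤ i.length := by
        have := congrArg List.length hw2'
        simp at this; omega
      have hpre : w' <+: i := by
        apply prefix_short (y := [D]) _ hlen
        exact ⟨U :: (i' ++ [D]), by simp [hw2']⟩
      have h1 := hi w' hpre
      simp [Bal, List.count_cons] at hbw
      omega
    | D :: w', hw2 =>
      exfalso; have := congrArg List.head? hw2; simp at this
    | F :: w', hw2 =>
      exfalso; have := congrArg List.head? hw2; simp at this
  · -- x = x' ++ w, (U::(i'++[D])) = w ++ (U::(i++[D]))
    have hlw : w.length = 0 := by
      have := congrArg List.length hw1; simp at this; omega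
    rcases List.length_eq_zero_iff.1 hlw with rfl
    simp only [List.append_nil] at hw1
    simp only [List.nil_append] at hw2
    refine ⟨by simp [hw1], ?_⟩
    have h2 : i' ++ [D] = i ++ [D] := by simpa using hw2
    exact ((List.append_inj' h2 rfl).1).symm

lemma lbu {x x' i i' : List Step} (h : x ++ (U :: (i ++ [D])) = x' ++ (U :: (i' ++ [D])))
    (hx : Bal x) (hx' : Bal x') (hi : Nn i) (hi' : Nn i') : x = x' ∧ i = i' := by
  rcases Nat.le_total x.length x'.length with hl | hl
  · exact lbu_aux h hx hx' hi hl
  · have := lbu_aux h.symm hx' hx hi' hl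
    exact ⟨this.1.symm, this.2.symm⟩

lemma fru_aux {β β' γ γ' : List Step} (h : β ++ [D] ++ γ = β' ++ [D] ++ γ')
    (hβ : Bal β) (hβ' : Bal β') (hn' : Nn β') (hl : β.length ≤ β'.length) :
    β = β' ∧ γ = γ' := by
  have h' : β ++ ([D] ++ γ) = β' ++ ([D] ++ γ') := by simpa [List.append_assoc] using h
  rcases List.append_eq_append_iff.1 h' with ⟨w, hw1, hw2⟩ | ⟨w, hw1, hw2⟩
  · -- β' = β ++ w, [D]++γ = w ++ [D] ++ γ'
    match w, hw2 with
    | [], hw2 =>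
      simp only [List.append_nil] at hw1
      subst hw1
      exact ⟨rfl, by simpa using hw2⟩
    | D :: w', hw2 =>
      exfalso
      have hpre : β ++ [D] <+: β' := by
        rw [hw1]
        exact pal ⟨w', rfl⟩
      have := hn' (β ++ [D]) hpre
      simp [Bal] at hβ
      simp [List.count_append] at this
      omega
    | U :: w', hw2 => exfalso; have := congrArg List.head? hw2; simp at this
    | F :: w', hw2 => exfalso; have := congrArg List.head? hw2; simp at this
  · -- β = β' ++ w
    have hlw : w.length = 0 := by
      have := congrArg List.length hw1; simp at this; omega
    rcases List.length_eq_zero_iff.1 hlw with rfl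
    simp only [List.append_nil] at hw1
    subst hw1
    simp only [List.nil_append] at hw2
    exact ⟨rfl, by simpa using hw2.symm⟩

lemma fru {β β' γ γ' : List Step} (h : β ++ [D] ++ γ = β' ++ [D] ++ γ')
    (hβ : Bal β) (hβ' : Bal β') (hn : Nn β) (hn' : Nn β') : β = β' ∧ γ = γ' := by
  rcases Nat.le_total β.length β'.length with hl | hl
  · exact fru_aux h hβ hβ' hn' hl
  · have := fru_aux h.symm hβ' hβ hn hl
    exact ⟨this.1.symm, this.2.symm⟩

/-! ### existence of the last-block decomposition -/

lemma lastU (z : List Step) (e : ℕ) (hz : Nn z) (hc : z.count U = z.count D + (e + 1)) :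
    ∃ x b, z = x ++ U :: b ∧ x.count U = x.count D + e ∧ Nn x ∧ Bal b ∧ Nn b := by
  rcases List.eq_nil_or_concat z with rfl | ⟨z₀, l, hzz⟩
  · simp at hc
  subst hzz
  simp only [List.concat_eq_append] at *
  have hlen : z₀.length < (z₀ ++ [l]).length := by simp
  match l with
  | U =>
    refine ⟨z₀, [], by simp, ?_, nn_prefix (x := z₀) hz, by simp [Bal], by intro p hp; simp at hp; simp [hp]⟩
    simp [List.count_append] at hc
    omega
  | F =>
    have hc₀ : z₀.count U = z₀.count D + (e + 1) := by
      simp [List.count_append] at hc; omega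
    obtain ⟨x, b, rfl, h1, h2, h3, h4⟩ := lastU z₀ e (nn_prefix hz) hc₀
    refine ⟨x, b ++ [F], by simp, h1, h2, ?_, ?_⟩
    · simp [Bal, List.count_append] at h3 ⊢; omega
    · intro p hp
      rcases prefix_append_cases hp with h' | ⟨q, hq, rfl⟩
      · exact h4 p h'
      · have hq' : q = [] ∨ q = [F] := by
          rcases hq with ⟨t, ht⟩
          match q, t, ht with
          | [], _, _ => exact Or.inl rfl
          | [F], [], _ => exact Or.inr rfl
        simp [Bal] at h3
        rcases hq' with rfl | rfl <;> simp [List.count_append] <;> omega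
  | D =>
    have hc₀ : z₀.count U = z₀.count D + (e + 1 + 1) := by
      simp [List.count_append] at hc; omega
    obtain ⟨x₁, b₁, hx₁, h1, h2, h3, h4⟩ := lastU z₀ (e + 1) (nn_prefix hz) hc₀
    have hlen₁ : x₁.length < (z₀ ++ [D]).length := by
      have := congrArg List.length hx₁; simp at this ⊢; omega
    obtain ⟨x, b₂, hx, g1, g2, g3, g4⟩ := lastU x₁ e h2 h1
    refine ⟨x, b₂ ++ U :: b₁ ++ [D], ?_, g1, g2, ?_, ?_⟩
    · rw [hx₁, hx]; simp
    · simp [Bal, List.count_append, List.count_cons] at h3 g3 ⊢; omega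
    · intro p hp
      rcases prefix_append_cases (x := b₂ ++ U :: b₁) hp with h' | ⟨q, hq, rfl⟩
      · rcases prefix_append_cases (x := b₂) h' with h'' | ⟨q, hq, rfl⟩
        · exact g4 p h''
        · match q, hq with
          | [], _ => simp [Bal] at g3; simp [List.count_append]; omega
          | U :: q', hq =>
            have hq' : q' <+: b₁ := by
              rcases hq with ⟨t, ht⟩; exact ⟨t, by simpa using ht⟩
            have := h4 q' hq'
            simp [Bal] at g3
            simp [List.count_append, List.count_cons]; omega
          | D :: q', hq => obtain ⟨t, ht⟩ := hq; simp at ht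
          | F :: q', hq => obtain ⟨t, ht⟩ := hq; simp at ht
      · have hq' : q = [] ∨ q = [D] := by
          rcases hq with ⟨t, ht⟩
          match q, t, ht with
          | [], _, _ => exact Or.inl rfl
          | [D], [], _ => exact Or.inr rfl
        simp [Bal] at g3 h3
        rcases hq' with rfl | rfl <;> simp [List.count_append, List.count_cons] <;> omega
termination_by z.length

lemma last_block_ex {z : List Step} (hm : IsMotzkin (z ++ [D])) :
    ∃ x b, z ++ [D] = x ++ (U :: (b ++ [D])) ∧ IsMotzkin x ∧ IsMotzkin b := by
  obtain ⟨hbal, hnn⟩ := hm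
  have hz : Nn z := nn_prefix (x := z) hnn
  have hc : z.count U = z.count D + 1 := by
    simp [List.count_append] at hbal
    have := hnn z ⟨[D], rfl⟩
    omega
  obtain ⟨x, b, rfl, h1, h2, h3, h4⟩ := lastU z 0 hz hc
  exact ⟨x, b, by simp, ⟨by simpa [Bal] using h1, h2⟩, ⟨h3, h4⟩⟩

/-! ### DH basic facts -/

lemma dh_ffree {w : List Step} (h : DH w) : w.count F = 0 := by
  induction h with
  | nil => simp
  | cons a b _ _ _ iha ihb => simp [List.count_append, List.count_cons, iha, ihb]

lemma dh_bal {w : List Step} (h : DH w) : Bal w := by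
  induction h with
  | nil => simp [Bal]
  | cons a b _ _ _ iha ihb => exact bal_wrap iha ihb

lemma dh_nn {w : List Step} (h : DH w) : Nn w := by
  induction h with
  | nil => intro p hp; simp at hp; simp [hp]
  | cons a b ha _ _ iha ihb => exact nn_wrap iha (dh_bal ha) ihb

/-- `DH` together with: every (top-level) prime component has height at least `t`. -/
inductive DHge (t : ℕ) : List Step → Prop
  | nil : DHge t []
  | cons (a b : List Step) : DH a → DHge t b → height (U :: (a ++ [D])) ≥ height b →
      t ≤ height (U :: (a ++ [D])) → DHge t (U :: (a ++ [D] ++ b))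

lemma dh_of_dhge {t : ℕ} {w : List Step} (h : DHge t w) : DH w := by
  induction h with
  | nil => exact DH.nil
  | cons a b ha _ hh _ ihb => exact DH.cons a b ha ihb hh

lemma dhge_of_dh {w : List Step} (h : DH w) : DHge 0 w := by
  induction h with
  | nil => exact DHge.nil
  | cons a b ha _ hh _ ihb => exact DHge.cons a b ha ihb hh (Nat.zero_le _)

lemma dhge_mono {t t' : ℕ} {w : List Step} (hle : t' ≤ t) (h : DHge t w) : DHge t' w := by
  induction h with
  | nil => exact DHge.nil
  | cons a b ha _ hh ht ihb => exact DHge.cons a b ha ihb hh (le_trans hle ht)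

lemma dhge_append {t q : ℕ} {x i : List Step} (hx : DHge t x) (hi : DH i)
    (h1 : height (U :: (i ++ [D])) ≤ t) (h2 : q ≤ height (U :: (i ++ [D]))) :
    DHge q (x ++ (U :: (i ++ [D]))) := by
  induction hx with
  | nil =>
    simpa using DHge.cons i [] hi DHge.nil (by simp) (le_trans h2 (le_refl _))
  | cons a b ha hb hh ht ihb =>
    have hsh : (U :: (a ++ [D] ++ b)) ++ (U :: (i ++ [D])) =
        U :: (a ++ [D] ++ (b ++ (U :: (i ++ [D])))) := by simp
    rw [hsh]
    refine DHge.cons a _ ha ihb ?_ ?_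
    · rw [height_append (dh_bal (dh_of_dhge hb))]
      exact max_le hh (le_trans h1 ht)
    · exact le_trans (le_trans h2 h1) ht

lemma dh_lastBlock {P : List Step} (h : DH P) (hne : P ≠ []) :
    ∃ α i, P = α ++ (U :: (i ++ [D])) ∧ DH α ∧ DH i := by
  induction h with
  | nil => exact absurd rfl hne
  | cons a b ha hb hh iha ihb =>
    rcases List.eq_nil_or_concat b with rfl | ⟨b₀, l, hbl⟩
    · exact ⟨[], a, by simp, DH.nil, ha⟩
    · have hbne : b ≠ [] := by rw [hbl]; simp
      obtain ⟨α', i, hbe, hα', hi⟩ := ihb hbne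
      refine ⟨U :: (a ++ [D] ++ α'), i, ?_, ?_, hi⟩
      · rw [hbe]; simp
      · refine DH.cons a α' ha hα' ?_
        exact le_trans (height_mono (by rw [hbe]; exact ⟨_, rfl⟩)) hh

lemma dh_split {w : List Step} (h : DH w) :
    ∀ x i, w = x ++ (U :: (i ++ [D])) → Bal x → Bal i → Nn i →
      DHge (height (U :: (i ++ [D]))) x ∧ DH i := by
  induction h with
  | nil =>
    intro x i he
    have := congrArg List.length he
    simp at this
  | cons a b ha hb hh iha ihb =>
    intro x i he hbx hbi hni
    match x, he with
    | [], he =>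
      simp only [List.nil_append, List.cons.injEq, true_and] at he
      have he' : a ++ [D] ++ b = i ++ [D] ++ [] := by simpa using he
      obtain ⟨rfl, rfl⟩ := fru he' (dh_bal ha) hbi (dh_nn ha) hni
      exact ⟨DHge.nil, ha⟩
    | U :: xt, he =>
      have he' : a ++ [D] ++ b = xt ++ (U :: (i ++ [D])) := by simpa using he
      rcases Nat.lt_or_ge xt.length (a.length + 1) with hl | hl
      · exfalso
        have hpre : xt <+: a := by
          apply prefix_short (y := [D] ++ b) _ (by omega)
          rw [List.append_assoc] at he'
          exact ⟨_, he'.symm⟩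
        have h1 := dh_nn ha xt hpre
        simp [Bal, List.count_cons] at hbx
        omega
      · have hpre : a ++ [D] <+: xt := by
          apply prefix_short (y := U :: (i ++ [D])) _ (by simp; omega)
          rw [← he']
          exact ⟨b, by simp⟩
        obtain ⟨x₂, hx₂⟩ := hpre
        subst hx₂
        have hbeq : b = x₂ ++ (U :: (i ++ [D])) := by
          have h2 : (a ++ [D]) ++ b = (a ++ [D]) ++ (x₂ ++ (U :: (i ++ [D]))) := by
            simpa [List.append_assoc] using he'
          exact List.append_cancel_left h2
        have hbx₂ : Bal x₂ := by
          have hba := dh_bal ha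
          simp [Bal, List.count_cons, List.count_append] at hbx hba ⊢
          omega
        obtain ⟨hge, hi⟩ := ihb x₂ i hbeq hbx₂ hbi hni
        refine ⟨?_, hi⟩
        have hx2b : height x₂ ≤ height b := height_mono (by rw [hbeq]; exact ⟨_, rfl⟩)
        have hBb : height (U :: (i ++ [D])) ≤ height b := by
          rw [hbeq, height_append hbx₂]
          exact le_max_right _ _
        exact DHge.cons a x₂ ha hge (le_trans hx2b hh) (le_trans hBb hh)
    | D :: xt, he => exact absurd (congrArg List.head? he) (by simp)
    | F :: xt, he => exact absurd (congrArg List.head? he) (by simp)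

lemma dh_inv_comp {β γ : List Step} (h : DH (U :: (β ++ [D] ++ γ))) (hbβ : Bal β) (hnβ : Nn β) :
    DH β ∧ DH γ ∧ height γ ≤ height β + 1 := by
  generalize hgen : U :: (β ++ [D] ++ γ) = w at h
  cases h with
  | nil => exact absurd hgen (by simp)
  | cons a b ha hb hh =>
    have he : a ++ [D] ++ b = β ++ [D] ++ γ := by
      simpa using hgen.symm
    obtain ⟨rfl, rfl⟩ := fru he (dh_bal ha) hbβ (dh_nn ha) hnβ
    rw [height_wrap (dh_nn ha)] at hh
    exact ⟨ha, hb, hh⟩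

/-! ### Phi basic facts -/

lemma motzkin_append {x y : List Step} (hx : IsMotzkin x) (hy : IsMotzkin y) :
    IsMotzkin (x ++ y) :=
  ⟨bal_append hx.1 hy.1, nn_append hx.2 hx.1 hy.2⟩

lemma motzkin_F : IsMotzkin [F] := by
  constructor
  · simp
  · intro p hp
    rcases hp with ⟨t, ht⟩
    match p, t, ht with
    | [], _, _ => simp
    | [F], [], _ => simp

lemma motzkin_wrapU {b : List Step} (hb : IsMotzkin b) : IsMotzkin (U :: (b ++ [D])) := by
  constructor
  · simp [Bal, List.count_append, List.count_cons]
    have := hb.1; omega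
  · have := nn_wrap hb.2 hb.1 (fun p hp => by simp at hp; simp [hp] : Nn [])
    simpa [Nn] using this

lemma phi_ml {P m : List Step} (h : Phi P m) : IsMotzkin m ∧ P.length = 2 * m.length := by
  induction h with
  | nil => exact ⟨⟨by simp [Bal], fun p hp => by simp at hp; simp [hp]⟩, by simp⟩
  | flat α a _ _ ih =>
    refine ⟨motzkin_append ih.1 motzkin_F, ?_⟩
    have := ih.2; simp [List.length_append]; omega
  | up α β γ a b c _ _ _ _ _ _ iha ihb ihc =>
    refine ⟨motzkin_append (motzkin_append iha.1 ihc.1) (motzkin_wrapU ihb.1), ?_⟩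
    have h1 := iha.2; have h2 := ihb.2; have h3 := ihc.2
    simp [List.length_append]; omega

lemma phi_inv {P m : List Step} (h : Phi P m) :
    (P = [] ∧ m = []) ∨
    (∃ α a, P = α ++ [U, D] ∧ m = a ++ [F] ∧ DH α ∧ Phi α a) ∨
    (∃ α β γ a b c, P = α ++ (U :: ((U :: (β ++ [D] ++ γ)) ++ [D])) ∧
      m = a ++ c ++ U :: (b ++ [D]) ∧
      DH α ∧ DH β ∧ DH γ ∧ Phi α a ∧ Phi β b ∧ Phi γ c) := by
  cases h with
  | nil => exact Or.inl ⟨rfl, rfl⟩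
  | flat α a hα ha => exact Or.inr (Or.inl ⟨α, a, rfl, rfl, hα, ha⟩)
  | up α β γ a b c hα hβ hγ ha hb hc =>
    exact Or.inr (Or.inr ⟨α, β, γ, a, b, c, by simp, rfl, hα, hβ, hγ, ha, hb, hc⟩)

lemma phi_ex (P : List Step) (h : DH P) : ∃ m, Phi P m := by
  rcases List.eq_nil_or_concat P with rfl | ⟨P₀, l, hP⟩
  · exact ⟨[], Phi.nil⟩
  have hne : P ≠ [] := by rw [hP]; simp
  obtain ⟨α, i, hPe, hα, hi⟩ := dh_lastBlock h hne
  have hlα : α.length < P.length := by rw [hPe]; simp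
  cases hi with
  | nil =>
    obtain ⟨a, ha⟩ := phi_ex α hα
    refine ⟨a ++ [F], ?_⟩
    rw [hPe]
    simpa using Phi.flat α a hα ha
  | cons β γ hβ hγ hhi =>
    have hlβ : β.length < P.length := by
      have := congrArg List.length hPe; simp at this; omega
    have hlγ : γ.length < P.length := by
      have := congrArg List.length hPe; simp at this; omega
    obtain ⟨a, ha⟩ := phi_ex α hα
    obtain ⟨b, hb⟩ := phi_ex β hβ
    obtain ⟨c, hc⟩ := phi_ex γ hγ
    refine ⟨a ++ c ++ U :: (b ++ [D]), ?_⟩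
    rw [hPe]
    have := Phi.up α β γ a b c hα hβ hγ ha hb hc
    have hsh : α ++ [U, U] ++ β ++ [D] ++ γ ++ [D] =
        α ++ (U :: ((U :: (β ++ [D] ++ γ)) ++ [D])) := by simp
    rwa [hsh] at this
termination_by P.length

lemma phi_uniq (P m₁ m₂ : List Step) (h1 : Phi P m₁) (h2 : Phi P m₂) : m₁ = m₂ := by
  rcases phi_inv h1 with ⟨rfl, rfl⟩ | ⟨α, a, hP1, rfl, hα, ha⟩ |
      ⟨α, β, γ, a, b, c, hP1, rfl, hα, hβ, hγ, ha, hb, hc⟩ <;>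
    rcases phi_inv h2 with ⟨hP2, rfl⟩ | ⟨α', a', hP2, rfl, hα', ha'⟩ |
      ⟨α', β', γ', a', b', c', hP2, rfl, hα', hβ', hγ', ha', hb', hc'⟩
  · rfl
  · exact absurd hP2 (by simp)
  · exact absurd hP2 (by simp)
  · exact absurd (hP2.symm.trans hP1) (by simp)
  · -- flat / flat
    subst hP1
    have he : α ++ [U, D] = α' ++ [U, D] := hP2
    have hαα : α = α' := (List.append_inj' he rfl).1
    subst hαα
    have hlα : α.length < (α ++ [U, D]).length := by simp
    rw [phi_uniq α a a' ha ha']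
  · -- flat / up : contradiction
    exfalso
    subst hP1
    have he : α ++ (U :: (([] : List Step) ++ [D])) =
        α' ++ (U :: ((U :: (β' ++ [D] ++ γ')) ++ [D])) := by simpa using hP2
    have := lbu he (dh_bal hα) (dh_bal hα')
      (fun p hp => by simp at hp; simp [hp])
      (nn_wrap (dh_nn hβ') (dh_bal hβ') (dh_nn hγ'))
    simp at this
  · exact absurd (hP2.symm.trans hP1) (by simp)
  · -- up / flat : contradiction
    exfalso
    subst hP1
    have he : α' ++ (U :: (([] : List Step) ++ [D])) =
        α ++ (U :: ((U :: (β ++ [D] ++ γ)) ++ [D])) := by simpa using hP2.symm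
    have := lbu he (dh_bal hα') (dh_bal hα)
      (fun p hp => by simp at hp; simp [hp])
      (nn_wrap (dh_nn hβ) (dh_bal hβ) (dh_nn hγ))
    simp at this
  · -- up / up
    subst hP1
    have he : α ++ (U :: ((U :: (β ++ [D] ++ γ)) ++ [D])) =
        α' ++ (U :: ((U :: (β' ++ [D] ++ γ')) ++ [D])) := hP2
    obtain ⟨hαα, hin⟩ := lbu he (dh_bal hα) (dh_bal hα')
      (nn_wrap (dh_nn hβ) (dh_bal hβ) (dh_nn hγ))
      (nn_wrap (dh_nn hβ') (dh_bal hβ') (dh_nn hγ'))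
    subst hαα
    have hin' : β ++ [D] ++ γ = β' ++ [D] ++ γ' := by simpa using hin
    obtain ⟨hββ, hγγ⟩ := fru hin' (dh_bal hβ) (dh_bal hβ') (dh_nn hβ) (dh_nn hβ')
    subst hββ; subst hγγ
    have hl : α.length < (α ++ (U :: ((U :: (β ++ [D] ++ γ)) ++ [D]))).length := by simp
    have hl2 : β.length < (α ++ (U :: ((U :: (β ++ [D] ++ γ)) ++ [D]))).length := by
      simp; omega
    have hl3 : γ.length < (α ++ (U :: ((U :: (β ++ [D] ++ γ)) ++ [D]))).length := by
      simp; omega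
    rw [phi_uniq α a a' ha ha', phi_uniq β b b' hb hb', phi_uniq γ c c' hc hc']
termination_by P.length

/-! ### heights of blocks -/

lemma height_UD : height ([U, D] : List Step) = 1 := by
  have := height_wrap (w := []) (fun p hp => by simp at hp; simp [hp])
  simpa using this

lemma bal_UB {β : List Step} (hβ : Bal β) : Bal (U :: (β ++ [D])) := by
  simp [Bal, List.count_append, List.count_cons] at *; omega

lemma height_inner {β γ : List Step} (hbβ : Bal β) (hnβ : Nn β)
    (hγ : height γ ≤ height β + 1) :
    height (U :: (β ++ [D] ++ γ)) = height β + 1 := by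
  have h1 : U :: (β ++ [D] ++ γ) = (U :: (β ++ [D])) ++ γ := by simp
  rw [h1, height_append (bal_UB hbβ), height_wrap hnβ]
  omega

lemma height_block {β γ : List Step} (hbβ : Bal β) (hnβ : Nn β) (hbγ : Bal γ) (hnγ : Nn γ)
    (hγ : height γ ≤ height β + 1) :
    height (U :: ((U :: (β ++ [D] ++ γ)) ++ [D])) = height β + 2 := by
  rw [height_wrap (nn_wrap hnβ hbβ hnγ), height_inner hbβ hnβ hγ]

/-! ### the `KeysLe` predicate: all atoms of a Motzkin word have key at most `s` -/

inductive KeysLe (s : ℕ) : List Step → Prop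
  | nil : KeysLe s []
  | flat (x : List Step) : KeysLe s x → 1 ≤ s → KeysLe s (x ++ [F])
  | up (x b β : List Step) : KeysLe s x → DH β → Phi β b → 2 + height β ≤ s →
      KeysLe s (x ++ (U :: (b ++ [D])))

lemma keysle_motzkin {s : ℕ} {x : List Step} (h : KeysLe s x) : IsMotzkin x := by
  induction h with
  | nil => exact ⟨by simp [Bal], fun p hp => by simp at hp; simp [hp]⟩
  | flat x _ _ ih => exact motzkin_append ih motzkin_F
  | up x b β _ _ hb _ ih => exact motzkin_append ih (motzkin_wrapU (phi_ml hb).1)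

lemma keysle_mono {s s' : ℕ} {x : List Step} (hss : s ≤ s') (h : KeysLe s x) : KeysLe s' x := by
  induction h with
  | nil => exact KeysLe.nil
  | flat x _ h1 ih => exact KeysLe.flat x ih (le_trans h1 hss)
  | up x b β _ hβ hb hk ih => exact KeysLe.up x b β ih hβ hb (le_trans hk hss)

lemma keysle_append {s : ℕ} {x y : List Step} (hx : KeysLe s x) (hy : KeysLe s y) :
    KeysLe s (x ++ y) := by
  induction hy with
  | nil => simpa using hx
  | flat y₀ _ h1 ih =>
    have := KeysLe.flat _ ih h1
    simpa [List.append_assoc] using this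
  | up y₀ b β _ hβ hb hk ih =>
    have := KeysLe.up _ b β ih hβ hb hk
    simpa [List.append_assoc] using this

/-- Key lemma (image of a `DH` path has all atom keys at most its height). -/
lemma keysle_of_phi {γ c : List Step} (h : Phi γ c) : DH γ → KeysLe (height γ) c := by
  induction h with
  | nil => intro _; exact KeysLe.nil
  | flat α a hα _ ih =>
    intro _
    have hhα : height α ≤ height (α ++ [U, D]) := height_mono ⟨_, rfl⟩
    have h1 : height (α ++ [U, D]) = max (height α) 1 := by
      rw [height_append (dh_bal hα), height_UD]
    exact KeysLe.flat a (keysle_mono hhα (ih hα)) (by omega)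
  | up α β γ₁ a b c hα hβ hγ₁ _ _ _ iha ihb ihc =>
    intro hd
    set i : List Step := U :: (β ++ [D] ++ γ₁) with hi
    have hsh : α ++ [U, U] ++ β ++ [D] ++ γ₁ ++ [D] = α ++ (U :: (i ++ [D])) := by
      simp [hi]
    rw [hsh] at hd ⊢
    have hbi : Bal i := bal_wrap (dh_bal hβ) (dh_bal hγ₁)
    have hni : Nn i := nn_wrap (dh_nn hβ) (dh_bal hβ) (dh_nn hγ₁)
    obtain ⟨hge, hdi⟩ := dh_split hd α i rfl (dh_bal hα) hbi hni
    obtain ⟨_, _, hγle⟩ := dh_inv_comp hdi (dh_bal hβ) (dh_nn hβ)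
    have hB : height (U :: (i ++ [D])) = height β + 2 :=
      height_block (dh_bal hβ) (dh_nn hβ) (dh_bal hγ₁) (dh_nn hγ₁) hγle
    have hH : height (α ++ (U :: (i ++ [D]))) = max (height α) (height β + 2) := by
      rw [height_append (dh_bal hα), hB]
    have hαle : height α ≤ height (α ++ (U :: (i ++ [D]))) := height_mono ⟨_, rfl⟩
    have hγ₁le : height γ₁ ≤ height (α ++ (U :: (i ++ [D]))) := by omega
    refine KeysLe.up (a ++ c) b β ?_ hβ (by assumption) (by omega)
    exact keysle_append (keysle_mono hαle (iha hα)) (keysle_mono hγ₁le (ihc hγ₁))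

/-- Every atom occurring in a word with `KeysLe s` has key at most `s`. -/
lemma key_atom {s : ℕ} {c : List Step} (h : KeysLe s c) :
    ∀ u b₀ v, c = u ++ (U :: (b₀ ++ [D])) ++ v → Bal u → Bal b₀ → Nn b₀ →
      ∃ β', Phi β' b₀ ∧ DH β' ∧ 2 + height β' ≤ s := by
  induction h with
  | nil =>
    intro u b₀ v he _ _ _
    have := congrArg List.length he; simp at this
  | flat x hx h1 ih =>
    intro u b₀ v he hbu hbb hnb
    rcases List.eq_nil_or_concat v with rfl | ⟨v₀, l, rfl⟩
    · exfalso
      have he' : (u ++ (U :: b₀)) ++ [D] = x ++ [F] := by simpa [List.append_assoc] using he.symm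
      have := (List.append_inj' he' rfl).2
      simp at this
    · have he' : (u ++ (U :: (b₀ ++ [D])) ++ v₀) ++ [l] = x ++ [F] := by
        simpa [List.append_assoc] using he.symm
      obtain ⟨he2, _⟩ := List.append_inj' he' rfl
      exact ih u b₀ v₀ he2.symm hbu hbb hnb
  | up x b β hx hβ hb hk ih =>
    intro u b₀ v he hbu hbb hnb
    have hbx : Bal x := (keysle_motzkin hx).1
    have hnbm : IsMotzkin b := (phi_ml hb).1
    have he' : u ++ ((U :: (b₀ ++ [D])) ++ v) = x ++ (U :: (b ++ [D])) := by
      simpa [List.append_assoc] using he.symm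
    rcases List.append_eq_append_iff.1 he' with ⟨w, hw1, hw2⟩ | ⟨w, hw1, hw2⟩
    · -- x = u ++ w, atom ++ v = w ++ blk
      rcases Nat.lt_or_ge w.length (b₀.length + 2) with hlw | hlw
      · -- w is a proper prefix of the atom
        have hwpre : w <+: U :: (b₀ ++ [D]) := by
          apply prefix_short (y := v) _ (by simp; omega)
          exact ⟨_, hw2.symm⟩
        match w, hwpre, hw2 with
        | [], _, hw2 =>
          -- atom ++ v = blk
          simp only [List.nil_append] at hw2
          have hw2' : b₀ ++ [D] ++ v = b ++ [D] ++ [] := by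
            have := congrArg List.tail hw2; simpa [List.append_assoc] using this
          obtain ⟨rfl, _⟩ := fru hw2' hbb hnbm.1 hnb hnbm.2
          exact ⟨β, hb, hβ, hk⟩
        | U :: w', hwpre, hw2 =>
          exfalso
          have hbw : Bal (U :: w') := by
            have : Bal (u ++ (U :: w')) := hw1 ▸ hbx
            exact bal_of_append this hbu
          have hw'pre : w' <+: b₀ := by
            apply prefix_short (y := [D]) _ (by simp at hlw ⊢; omega)
            rcases hwpre with ⟨t, ht⟩
            exact ⟨t, by simpa using ht⟩
          have := hnb w' hw'pre
          simp [Bal, List.count_cons] at hbw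
          omega
        | D :: w', hwpre, _ => obtain ⟨t, ht⟩ := hwpre; simp at ht
        | F :: w', hwpre, _ => obtain ⟨t, ht⟩ := hwpre; simp at ht
      · -- the atom is a prefix of w : recurse into x
        have hapre : (U :: (b₀ ++ [D])) <+: w :=
          prefix_short (y := U :: (b ++ [D])) ⟨v, hw2⟩ (by simp; omega)
        obtain ⟨v₁, hv₁⟩ := hapre
        refine ih u b₀ v₁ ?_ hbu hbb hnb
        rw [hw1, ← hv₁]
        simp [List.append_assoc]
    · -- u = x ++ w, blk = w ++ atom ++ v
      have hbw : Bal w := bal_of_append (hw1 ▸ hbu) hbx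
      match w, hw2 with
      | [], hw2 =>
        simp only [List.nil_append] at hw2
        have hw2' : b₀ ++ [D] ++ v = b ++ [D] ++ [] := by
          have := congrArg List.tail hw2.symm; simpa [List.append_assoc] using this
        obtain ⟨rfl, _⟩ := fru hw2' hbb hnbm.1 hnb hnbm.2
        exact ⟨β, hb, hβ, hk⟩
      | U :: w', hw2 =>
        exfalso
        have hlen : w'.length ≤ b.length := by
          have := congrArg List.length hw2; simp at this; omega
        have hw'pre : w' <+: b := by
          apply prefix_short (y := [D]) _ hlen
          refine ⟨(U :: (b₀ ++ [D])) ++ v, ?_⟩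
          have := congrArg List.tail hw2
          simpa [List.append_assoc] using this.symm
        have := hnbm.2 w' hw'pre
        simp [Bal, List.count_cons] at hbw
        omega
      | D :: w', hw2 => exact absurd (congrArg List.head? hw2) (by simp)
      | F :: w', hw2 => exact absurd (congrArg List.head? hw2) (by simp)

/-! ### more DHge facts and the splitting construction -/

lemma ge_one_comp {a : List Step} : 1 ≤ height (U :: (a ++ [D])) := by
  have := ge_one_wrap (a := a) (b := [])
  simpa using this

lemma dhge_one {w : List Step} (h : DH w) : DHge 1 w := by
  induction h with
  | nil => exact DHge.nil
  | cons a b ha _ hh _ ihb => exact DHge.cons a b ha ihb hh ge_one_comp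

lemma dhge_last {t : ℕ} {w : List Step} (h : DHge t w) :
    ∀ x i, w = x ++ (U :: (i ++ [D])) → Bal x → Bal i → Nn i →
      t ≤ height (U :: (i ++ [D])) := by
  induction h with
  | nil =>
    intro x i he
    have := congrArg List.length he; simp at this
  | cons a b ha hb hh ht ihb =>
    intro x i he hbx hbi hni
    match x, he with
    | [], he =>
      simp only [List.nil_append, List.cons.injEq, true_and] at he
      have he' : a ++ [D] ++ b = i ++ [D] ++ [] := by simpa using he
      obtain ⟨rfl, rfl⟩ := fru he' (dh_bal ha) hbi (dh_nn ha) hni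
      exact ht
    | U :: xt, he =>
      have he' : a ++ [D] ++ b = xt ++ (U :: (i ++ [D])) := by simpa using he
      rcases Nat.lt_or_ge xt.length (a.length + 1) with hl | hl
      · exfalso
        have hpre : xt <+: a := by
          apply prefix_short (y := [D] ++ b) _ (by omega)
          rw [List.append_assoc] at he'
          exact ⟨_, he'.symm⟩
        have h1 := dh_nn ha xt hpre
        simp [Bal, List.count_cons] at hbx
        omega
      · have hpre : a ++ [D] <+: xt := by
          apply prefix_short (y := U :: (i ++ [D])) _ (by simp; omega)
          rw [← he']
          exact ⟨b, by simp⟩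
        obtain ⟨x₂, hx₂⟩ := hpre
        subst hx₂
        have hbeq : b = x₂ ++ (U :: (i ++ [D])) := by
          have h2 : (a ++ [D]) ++ b = (a ++ [D]) ++ (x₂ ++ (U :: (i ++ [D]))) := by
            simpa [List.append_assoc] using he'
          exact List.append_cancel_left h2
        have hbx₂ : Bal x₂ := by
          have hba := dh_bal ha
          simp [Bal, List.count_cons, List.count_append] at hbx hba ⊢
          omega
        exact ihb x₂ i hbeq hbx₂ hbi hni
    | D :: xt, he => exact absurd (congrArg List.head? he) (by simp)
    | F :: xt, he => exact absurd (congrArg List.head? he) (by simp)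

/-- The last atom of the image of a path that is `DHge k` has key at least `k`. -/
lemma l1 {k : ℕ} {α a : List Step} (hge : DHge k α) (hd : DH α) (hφ : Phi α a)
    (hne : α ≠ []) :
    (∃ y, a = y ++ [F] ∧ k ≤ 1) ∨
    (∃ y b₀ β₀, a = y ++ (U :: (b₀ ++ [D])) ∧ IsMotzkin y ∧ IsMotzkin b₀ ∧
      DH β₀ ∧ Phi β₀ b₀ ∧ k ≤ 2 + height β₀) := by
  rcases phi_inv hφ with ⟨rfl, rfl⟩ | ⟨α₀, a₀, hP, rfl, hα₀, ha₀⟩ |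
      ⟨α₀, β₀, γ₀, a₀, b₀, c₀, hP, rfl, hα₀, hβ₀, hγ₀, ha₀, hb₀, hc₀⟩
  · exact absurd rfl hne
  · left
    refine ⟨a₀, rfl, ?_⟩
    have := dhge_last hge α₀ [] (by simpa using hP) (dh_bal hα₀)
      (by simp [Bal]) (fun p hp => by simp at hp; simp [hp])
    calc k ≤ height (U :: (([] : List Step) ++ [D])) := this
      _ = 1 := height_UD
  · right
    subst hP
    set i : List Step := U :: (β₀ ++ [D] ++ γ₀) with hi
    have hbi : Bal i := bal_wrap (dh_bal hβ₀) (dh_bal hγ₀)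
    have hni : Nn i := nn_wrap (dh_nn hβ₀) (dh_bal hβ₀) (dh_nn hγ₀)
    obtain ⟨_, hdi⟩ := dh_split hd α₀ i rfl (dh_bal hα₀) hbi hni
    obtain ⟨_, _, hγle⟩ := dh_inv_comp hdi (dh_bal hβ₀) (dh_nn hβ₀)
    have hB : height (U :: (i ++ [D])) = height β₀ + 2 :=
      height_block (dh_bal hβ₀) (dh_nn hβ₀) (dh_bal hγ₀) (dh_nn hγ₀) hγle
    have hk := dhge_last hge α₀ i rfl (dh_bal hα₀) hbi hni
    refine ⟨a₀ ++ c₀, b₀, β₀, by simp, motzkin_append (phi_ml ha₀).1 (phi_ml hc₀).1,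
      (phi_ml hb₀).1, hβ₀, hb₀, by omega⟩

/-- Splitting a word with bounded keys at threshold `t`. -/
lemma split_ex (x : List Step) (s t : ℕ) (hk : KeysLe s x) (ht : 1 ≤ t) :
    ∃ a c α γ, x = a ++ c ∧ Phi α a ∧ DHge (t + 1) α ∧ height α ≤ s ∧
      Phi γ c ∧ DH γ ∧ height γ ≤ t := by
  cases hk with
  | nil =>
    exact ⟨[], [], [], [], by simp, Phi.nil, DHge.nil, by simp, Phi.nil, DH.nil, by simp⟩
  | flat x₀ hk₀ hs =>
    have hl : x₀.length < (x₀ ++ [F]).length := by simp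
    obtain ⟨a, c, α, γ, he, hpa, hga, hha, hpc, hdc, hhc⟩ := split_ex x₀ s t hk₀ ht
    refine ⟨a, c ++ [F], α, γ ++ [U, D], by rw [he]; simp, hpa, hga, hha,
      Phi.flat γ c hdc hpc, ?_, ?_⟩
    · have h1 : height (U :: (([] : List Step) ++ [D])) ≤ 1 := le_of_eq height_UD
      have := dhge_append (q := 0) (dhge_one hdc) DH.nil h1 (Nat.zero_le _)
      exact dh_of_dhge (by simpa using this)
    · rw [height_append (dh_bal hdc), height_UD]
      omega
  | up x₀ b β hk₀ hβ hb hkey =>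
    have hlx : x₀.length < (x₀ ++ (U :: (b ++ [D]))).length := by simp
    by_cases hcs : height β + 2 ≤ t
    · obtain ⟨a, c₀, α, γ₀, he, hpa, hga, hha, hpc₀, hdγ₀, hhγ₀⟩ := split_ex x₀ s t hk₀ ht
      have hkc : KeysLe t c₀ := keysle_mono hhγ₀ (keysle_of_phi hpc₀ hdγ₀)
      have hlc : c₀.length < (x₀ ++ (U :: (b ++ [D]))).length := by
        have := congrArg List.length he; simp at this ⊢; omega
      obtain ⟨a₃, c₃, α₃, γ₃, he₃, hpa₃, hga₃, hha₃, hpc₃, hdγ₃, hhγ₃⟩ :=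
        split_ex c₀ t (height β + 1) hkc (by omega)
      have hdi : DH (U :: (β ++ [D] ++ γ₃)) := by
        refine DH.cons β γ₃ hβ hdγ₃ ?_
        rw [height_wrap (dh_nn hβ)]; omega
      have hBh : height (U :: ((U :: (β ++ [D] ++ γ₃)) ++ [D])) = height β + 2 :=
        height_block (dh_bal hβ) (dh_nn hβ) (dh_bal hdγ₃) (dh_nn hdγ₃) (by omega)
      have hgnew : DHge 0 (α₃ ++ (U :: ((U :: (β ++ [D] ++ γ₃)) ++ [D]))) :=
        dhge_append hga₃ hdi (by omega) (Nat.zero_le _)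
      have hpnew : Phi (α₃ ++ (U :: ((U :: (β ++ [D] ++ γ₃)) ++ [D])))
          (c₀ ++ (U :: (b ++ [D]))) := by
        have h2 := Phi.up α₃ β γ₃ a₃ b c₃ (dh_of_dhge hga₃) hβ hdγ₃ hpa₃ hb hpc₃
        have hsh : α₃ ++ [U, U] ++ β ++ [D] ++ γ₃ ++ [D] =
            α₃ ++ (U :: ((U :: (β ++ [D] ++ γ₃)) ++ [D])) := by simp
        rw [hsh] at h2
        rw [he₃]
        simpa [List.append_assoc] using h2
      have hhnew : height (α₃ ++ (U :: ((U :: (β ++ [D] ++ γ₃)) ++ [D]))) ≤ t := by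
        rw [height_append (dh_bal (dh_of_dhge hga₃)), hBh]
        omega
      exact ⟨a, c₀ ++ (U :: (b ++ [D])), α, _, by rw [he]; simp [List.append_assoc],
        hpa, hga, hha, hpnew, dh_of_dhge hgnew, hhnew⟩
    · obtain ⟨a₄, c₄, α₄, γ₄, he₄, hpa₄, hga₄, hha₄, hpc₄, hdγ₄, hhγ₄⟩ :=
        split_ex x₀ s (height β + 1) hk₀ (by omega)
      have hdi : DH (U :: (β ++ [D] ++ γ₄)) := by
        refine DH.cons β γ₄ hβ hdγ₄ ?_
        rw [height_wrap (dh_nn hβ)]; omega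
      have hBh : height (U :: ((U :: (β ++ [D] ++ γ₄)) ++ [D])) = height β + 2 :=
        height_block (dh_bal hβ) (dh_nn hβ) (dh_bal hdγ₄) (dh_nn hdγ₄) (by omega)
      have hgnew : DHge (t + 1) (α₄ ++ (U :: ((U :: (β ++ [D] ++ γ₄)) ++ [D]))) :=
        dhge_append hga₄ hdi (by omega) (by omega)
      have hpnew : Phi (α₄ ++ (U :: ((U :: (β ++ [D] ++ γ₄)) ++ [D])))
          (x₀ ++ (U :: (b ++ [D]))) := by
        have h2 := Phi.up α₄ β γ₄ a₄ b c₄ (dh_of_dhge hga₄) hβ hdγ₄ hpa₄ hb hpc₄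
        have hsh : α₄ ++ [U, U] ++ β ++ [D] ++ γ₄ ++ [D] =
            α₄ ++ (U :: ((U :: (β ++ [D] ++ γ₄)) ++ [D])) := by simp
        rw [hsh] at h2
        rw [he₄]
        simpa [List.append_assoc] using h2
      have hhnew : height (α₄ ++ (U :: ((U :: (β ++ [D] ++ γ₄)) ++ [D]))) ≤ s := by
        rw [height_append (dh_bal (dh_of_dhge hga₄)), hBh]
        omega
      exact ⟨x₀ ++ (U :: (b ++ [D])), [], _, [], by simp, hpnew, hgnew, hhnew,
        Phi.nil, DH.nil, by simp⟩
termination_by x.length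

/-! ### uniqueness of the split -/

lemma split_unique {N : ℕ}
    (HI : ∀ m' P P' : List Step, m'.length < N → DH P → DH P' → Phi P m' → Phi P' m' → P = P')
    {t : ℕ} (ht : 1 ≤ t) {a c a' c' α' γ : List Step}
    (he : a ++ c = a' ++ c') (hle : a.length ≤ a'.length)
    (hma : IsMotzkin a)
    (ha' : Phi α' a') (hgα' : DHge (t + 1) α') (hdα' : DH α')
    (hc : Phi γ c) (hdγ : DH γ) (hhγ : height γ ≤ t)
    (hcN : c.length < N) :
    a = a' ∧ c = c' := by
  obtain ⟨s, hs1, hs2⟩ : ∃ s, a' = a ++ s ∧ c = s ++ c' := by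
    rcases List.append_eq_append_iff.1 he with ⟨w, hw1, hw2⟩ | ⟨w, hw1, hw2⟩
    · exact ⟨w, hw1, hw2⟩
    · have hw0 : w.length = 0 := by
        have := congrArg List.length hw1; simp at this; omega
      rcases List.length_eq_zero_iff.1 hw0 with rfl
      simp only [List.append_nil] at hw1
      simp only [List.nil_append] at hw2
      exact ⟨[], by simp [hw1], by simp [hw2]⟩
  by_cases hsnil : s = []
  · subst hsnil
    simp only [List.append_nil] at hs1
    simp only [List.nil_append] at hs2
    exact ⟨hs1.symm, hs2⟩
  exfalso
  have hα'ne : α' ≠ [] := by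
    intro hnil
    subst hnil
    have hlen := (phi_ml ha').2
    simp only [List.length_nil] at hlen
    have h0 : a'.length = 0 := by omega
    have h1 := congrArg List.length hs1
    simp at h1
    exact hsnil (List.length_eq_zero_iff.1 (by omega))
  rcases l1 hgα' hdα' ha' hα'ne with ⟨y, hy, hk1⟩ | ⟨y, b₀, β₀, hy, hmy, hmb₀, hdβ₀, hpβ₀, hk⟩
  · omega
  have hKc : KeysLe t c := keysle_mono hhγ (keysle_of_phi hc hdγ)
  have heq2 : a ++ s = y ++ (U :: (b₀ ++ [D])) := by rw [← hs1, hy]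
  obtain ⟨u, hu1, hu2⟩ : ∃ u, y = a ++ u ∧ s = u ++ (U :: (b₀ ++ [D])) := by
    rcases List.append_eq_append_iff.1 heq2 with ⟨w, hw1, hw2⟩ | ⟨w, hw1, hw2⟩
    · exact ⟨w, hw1, hw2⟩
    · -- a = y ++ w, U::(b₀++[D]) = w ++ s
      match w, hw2 with
      | [], hw2 =>
        refine ⟨[], by simp [hw1], by simpa using hw2.symm⟩
      | U :: w', hw2 =>
        exfalso
        have hbw : Bal (U :: w') := bal_of_append (hw1 ▸ hma.1) hmy.1
        have htl : b₀ ++ [D] = w' ++ s := by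
          have := congrArg List.tail hw2; simpa using this
        have hlw : w'.length ≤ b₀.length := by
          have := congrArg List.length htl
          have hsl : 1 ≤ s.length := by
            rcases s with _ | _
            · exact absurd rfl hsnil
            · simp
          simp at this; omega
        have hw'pre : w' <+: b₀ := prefix_short (y := [D]) ⟨s, htl.symm⟩ hlw
        have := hmb₀.2 w' hw'pre
        simp [Bal, List.count_cons] at hbw
        omega
      | D :: w', hw2 => exact absurd (congrArg List.head? hw2) (by simp)
      | F :: w', hw2 => exact absurd (congrArg List.head? hw2) (by simp)
  have hcu : c = u ++ (U :: (b₀ ++ [D])) ++ c' := by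
    rw [hs2, hu2]
  have hbu : Bal u := bal_of_append (hu1 ▸ hmy.1) hma.1
  obtain ⟨β₁, hpβ₁, hdβ₁, hkey₁⟩ := key_atom hKc u b₀ c' hcu hbu hmb₀.1 hmb₀.2
  have hb₀N : b₀.length < N := by
    have := congrArg List.length hcu; simp at this; omega
  have hβeq : β₁ = β₀ := HI b₀ β₁ β₀ hb₀N hdβ₁ hdβ₀ hpβ₁ hpβ₀
  subst hβeq
  omega

/-- Every Motzkin path has bounded keys (given preimages for shorter paths). -/
lemma keysle_ex {N : ℕ}
    (HE : ∀ m' : List Step, m'.length < N → IsMotzkin m' → ∃ P, DH P ∧ Phi P m')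
    (x : List Step) (hxN : x.length < N) (hx : IsMotzkin x) : ∃ s, KeysLe s x := by
  rcases List.eq_nil_or_concat x with rfl | ⟨x₀, l, hxe⟩
  · exact ⟨1, KeysLe.nil⟩
  subst hxe
  simp only [List.concat_eq_append] at *
  match l with
  | U =>
    exfalso
    have h1 := hx.1
    have h2 := hx.2 x₀ ⟨[U], rfl⟩
    simp [List.count_append] at h1
    omega
  | F =>
    have hm₀ : IsMotzkin x₀ := by
      refine ⟨?_, nn_prefix (x := x₀) hx.2⟩
      have := hx.1; simp [List.count_append] at this; omega
    obtain ⟨s₀, hs₀⟩ := keysle_ex HE x₀ (by simp at hxN ⊢; omega) hm₀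
    exact ⟨max s₀ 1, KeysLe.flat x₀ (keysle_mono (le_max_left _ _) hs₀) (le_max_right _ _)⟩
  | D =>
    obtain ⟨x', b₀, hxe', hmx', hmb₀⟩ := last_block_ex hx
    have hlb : b₀.length + 2 + x'.length = x₀.length + 1 := by
      have := congrArg List.length hxe'; simp at this; omega
    obtain ⟨β₀, hdβ₀, hpβ₀⟩ := HE b₀ (by simp at hxN; omega) hmb₀
    obtain ⟨s', hs'⟩ := keysle_ex HE x' (by simp at hxN ⊢; omega) hmx'
    refine ⟨max s' (2 + height β₀), ?_⟩
    rw [hxe']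
    exact KeysLe.up x' b₀ β₀ (keysle_mono (le_max_left _ _) hs') hdβ₀ hpβ₀ (le_max_right _ _)
termination_by x.length
decreasing_by
  · simp [hxe]
  · simp [hxe]
    omega

/-! ### the master induction: injectivity and surjectivity of φ -/

lemma master (N : ℕ) :
    (∀ m P P' : List Step, m.length = N → DH P → DH P' → Phi P m → Phi P' m → P = P') ∧
    (∀ m : List Step, m.length = N → IsMotzkin m → ∃ P, DH P ∧ Phi P m) := by
  have HI : ∀ m' P P' : List Step, m'.length < N → DH P → DH P' → Phi P m' → Phi P' m' →
      P = P' := fun m' P P' hl hP hP' h1 h2 => (master m'.length).1 m' P P' rfl hP hP' h1 h2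
  have HE : ∀ m' : List Step, m'.length < N → IsMotzkin m' → ∃ P, DH P ∧ Phi P m' :=
    fun m' hl hm => (master m'.length).2 m' rfl hm
  constructor
  · -- injectivity
    intro m P P' hmN hdP hdP' h1 h2
    rcases phi_inv h1 with ⟨rfl, rfl⟩ | ⟨α, a, hP1, hm1, hα, ha⟩ |
        ⟨α, β, γ, a, b, c, hP1, hm1, hα, hβ, hγ, ha, hb, hc⟩ <;>
      rcases phi_inv h2 with ⟨hP2, hm2⟩ | ⟨α', a', hP2, hm2, hα', ha'⟩ |
        ⟨α', β', γ', a', b', c', hP2, hm2, hα', hβ', hγ', ha', hb', hc'⟩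
    · exact hP2.symm
    · exfalso; have := congrArg List.length hm2; simp at this
    · exfalso; have := congrArg List.length hm2; simp at this
    · exfalso; have := congrArg List.length (hm1.symm.trans hm2); simp at this
    · -- flat / flat
      have hmm : a ++ [F] = a' ++ [F] := hm1.symm.trans hm2
      have haa : a = a' := (List.append_inj' hmm rfl).1
      subst haa
      have hlaN : a.length < N := by
        have := congrArg List.length hm1; simp at this; omega
      have hαα : α = α' := HI a α α' hlaN hα hα' ha ha'
      rw [hP1, hP2, hαα]
    · -- flat / up : impossible
      exfalso
      have hmm : (a' ++ c' ++ (U :: b')) ++ [D] = a ++ [F] := by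
        rw [← hm1]
        rw [hm2]
        simp [List.append_assoc]
      have := (List.append_inj' hmm rfl).2
      simp at this
    · exfalso; have := congrArg List.length (hm1.symm.trans hm2); simp at this
    · -- up / flat : impossible
      exfalso
      have hmm : (a ++ c ++ (U :: b)) ++ [D] = a' ++ [F] := by
        rw [← hm2]
        rw [hm1]
        simp [List.append_assoc]
      have := (List.append_inj' hmm rfl).2
      simp at this
    · -- up / up : the main case
      have hmm : (a ++ c) ++ (U :: (b ++ [D])) = (a' ++ c') ++ (U :: (b' ++ [D])) := by
        have := hm1.symm.trans hm2
        simpa [List.append_assoc] using this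
      have hma : IsMotzkin a := (phi_ml ha).1
      have hmc : IsMotzkin c := (phi_ml hc).1
      have hma' : IsMotzkin a' := (phi_ml ha').1
      have hmc' : IsMotzkin c' := (phi_ml hc').1
      have hmb : IsMotzkin b := (phi_ml hb).1
      have hmb' : IsMotzkin b' := (phi_ml hb').1
      obtain ⟨hx, hbb⟩ := lbu hmm (bal_append hma.1 hmc.1) (bal_append hma'.1 hmc'.1)
        hmb.2 hmb'.2
      subst hbb
      have hlbN : b.length < N := by
        have := congrArg List.length hm1; simp at this; omega
      have hββ : β = β' := HI b β β' hlbN hβ hβ' hb hb'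
      subst hββ
      -- extract DHge and height bounds from DH P and DH P'
      rw [hP1] at hdP
      rw [hP2] at hdP'
      obtain ⟨hgeα, hdi⟩ := dh_split hdP α _ rfl (dh_bal hα)
        (bal_wrap (dh_bal hβ) (dh_bal hγ)) (nn_wrap (dh_nn hβ) (dh_bal hβ) (dh_nn hγ))
      obtain ⟨_, _, hγle⟩ := dh_inv_comp hdi (dh_bal hβ) (dh_nn hβ)
      have hB : height (U :: ((U :: (β ++ [D] ++ γ)) ++ [D])) = height β + 2 :=
        height_block (dh_bal hβ) (dh_nn hβ) (dh_bal hγ) (dh_nn hγ) hγle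
      rw [hB] at hgeα
      obtain ⟨hgeα', hdi'⟩ := dh_split hdP' α' _ rfl (dh_bal hα')
        (bal_wrap (dh_bal hβ) (dh_bal hγ')) (nn_wrap (dh_nn hβ) (dh_bal hβ) (dh_nn hγ'))
      obtain ⟨_, _, hγle'⟩ := dh_inv_comp hdi' (dh_bal hβ) (dh_nn hβ)
      have hB' : height (U :: ((U :: (β ++ [D] ++ γ')) ++ [D])) = height β + 2 :=
        height_block (dh_bal hβ) (dh_nn hβ) (dh_bal hγ') (dh_nn hγ') hγle'
      rw [hB'] at hgeα'
      have hgeα2 : DHge (height β + 1 + 1) α := by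
        have : height β + 2 = height β + 1 + 1 := by omega
        rwa [this] at hgeα
      have hgeα2' : DHge (height β + 1 + 1) α' := by
        have : height β + 2 = height β + 1 + 1 := by omega
        rwa [this] at hgeα'
      have hlcN : c.length < N := by
        have := congrArg List.length hm1; simp at this; omega
      have hlcN' : c'.length < N := by
        have := congrArg List.length hm2; simp at this; omega
      have haacc : a = a' ∧ c = c' := by
        rcases Nat.le_total a.length a'.length with hle | hle
        · exact split_unique HI (by omega) hx hle hma ha' hgeα2' (dh_of_dhge hgeα2')
            hc hγ (by omega) hlcN
        · have := split_unique HI (by omega) hx.symm hle hma' ha hgeα2 (dh_of_dhge hgeα2)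
            hc' hγ' (by omega) hlcN'
          exact ⟨this.1.symm, this.2.symm⟩
      obtain ⟨haa, hcc⟩ := haacc
      subst haa; subst hcc
      have hlaN : a.length < N := by
        have := congrArg List.length hm1; simp at this; omega
      have hαα : α = α' := HI a α α' hlaN hα hα' ha ha'
      have hγγ : γ = γ' := HI c γ γ' hlcN hγ hγ' hc hc'
      rw [hP1, hP2, hαα, hγγ]
  · -- existence
    intro m hmN hm
    rcases List.eq_nil_or_concat m with rfl | ⟨m₀, l, hme⟩
    · exact ⟨[], DH.nil, Phi.nil⟩
    subst hme
    simp only [List.concat_eq_append] at *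
    match l with
    | U =>
      exfalso
      have h1 := hm.1
      have h2 := hm.2 m₀ ⟨[U], rfl⟩
      simp [List.count_append] at h1
      omega
    | F =>
      have hm₀ : IsMotzkin m₀ := by
        refine ⟨?_, nn_prefix (x := m₀) hm.2⟩
        have := hm.1; simp [List.count_append] at this; omega
      obtain ⟨P₀, hd₀, hp₀⟩ := HE m₀ (by simp at hmN; omega) hm₀
      refine ⟨P₀ ++ [U, D], ?_, Phi.flat P₀ m₀ hd₀ hp₀⟩
      have h1 : height (U :: (([] : List Step) ++ [D])) ≤ 1 := le_of_eq height_UD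
      have := dhge_append (q := 0) (dhge_one hd₀) DH.nil h1 (Nat.zero_le _)
      exact dh_of_dhge (by simpa using this)
    | D =>
      obtain ⟨x, b, hme', hmx, hmb⟩ := last_block_ex hm
      have hlen : x.length + b.length + 2 = N := by
        have := congrArg List.length hme'
        simp at this hmN
        omega
      obtain ⟨β, hdβ, hpβ⟩ := HE b (by omega) hmb
      obtain ⟨s, hks⟩ := keysle_ex HE x (by omega) hmx
      obtain ⟨a, c, α, γ, hxe, hpa, hga, hha, hpc, hdγ, hhγ⟩ :=
        split_ex x s (height β + 1) hks (by omega)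
      have hdi : DH (U :: (β ++ [D] ++ γ)) := by
        refine DH.cons β γ hdβ hdγ ?_
        rw [height_wrap (dh_nn hdβ)]; omega
      have hBh : height (U :: ((U :: (β ++ [D] ++ γ)) ++ [D])) = height β + 2 :=
        height_block (dh_bal hdβ) (dh_nn hdβ) (dh_bal hdγ) (dh_nn hdγ) (by omega)
      have hgnew : DHge 0 (α ++ (U :: ((U :: (β ++ [D] ++ γ)) ++ [D]))) :=
        dhge_append hga hdi (by omega) (Nat.zero_le _)
      have hpnew : Phi (α ++ (U :: ((U :: (β ++ [D] ++ γ)) ++ [D]))) (m₀ ++ [D]) := by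
        have h2 := Phi.up α β γ a b c (dh_of_dhge hga) hdβ hdγ hpa hpβ hpc
        have hsh : α ++ [U, U] ++ β ++ [D] ++ γ ++ [D] =
            α ++ (U :: ((U :: (β ++ [D] ++ γ)) ++ [D])) := by simp
        rw [hsh] at h2
        rw [hme', hxe]
        simpa [List.append_assoc] using h2
      exact ⟨_, dh_of_dhge hgnew, hpnew⟩
termination_by N
decreasing_by
  all_goals omega
end Bij
/-- φ is a well-defined bijection from D_n^{h,≥} onto the Motzkin paths of length n. -/
theorem stmt9 (n : ℕ) :
    (∀ P : List Step, DH P → P.length = 2 * n → ∃! m : List Step, Phi P m) ∧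
    (∀ P m : List Step, DH P → P.length = 2 * n → Phi P m →
      IsMotzkin m ∧ m.length = n) ∧
    (∀ m : List Step, IsMotzkin m → m.length = n →
      ∃! P : List Step, DH P ∧ P.length = 2 * n ∧ Phi P m) := by
  refine ⟨?_, ?_, ?_⟩
  · intro P hP _
    obtain ⟨m, hm⟩ := Bij.phi_ex P hP
    exact ⟨m, hm, fun m' hm' => Bij.phi_uniq P m' m hm' hm⟩
  · intro P m _ hlen hm
    obtain ⟨hmot, hl⟩ := Bij.phi_ml hm
    exact ⟨hmot, by omega⟩
  · intro m hm hlen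
    obtain ⟨P, hdP, hpP⟩ := (Bij.master m.length).2 m rfl hm
    refine ⟨P, ⟨hdP, ?_, hpP⟩, ?_⟩
    · have := (Bij.phi_ml hpP).2
      omega
    · rintro P' ⟨hdP', _, hpP'⟩
      exact (Bij.master m.length).1 m P' P rfl hdP' hdP hpP' hpP
end

section
/- For every n ≥ 0 and every P ∈ D_n^{h,≥}, the number of occurrences of the factor UD in P equals the number of F steps in φ(P) plus the number of occurrences of the factor UD in φ(P). -/
open Step

def cf2 (s t : Step) : List Step → ℕ
  | a :: b :: l => (if a = s ∧ b = t then 1 else 0) + cf2 s t (b :: l)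
  | _ => 0

def bnd (s t : Step) (x y : List Step) : ℕ :=
  if x.getLast? = some s ∧ y.head? = some t then 1 else 0

lemma cf2_append (s t : Step) (x y : List Step) :
    cf2 s t (x ++ y) = cf2 s t x + bnd s t x y + cf2 s t y := by
  induction x with
  | nil => simp [cf2, bnd]
  | cons a x ih =>
    cases x with
    | nil =>
      cases y with
      | nil => simp [cf2, bnd]
      | cons b y => simp [cf2, bnd]
    | cons b x =>
      have : (a :: b :: x) ++ y = a :: b :: (x ++ y) := rfl
      rw [this]
      show (if a = s ∧ b = t then 1 else 0) + cf2 s t (b :: (x ++ y)) = _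
      rw [show b :: (x ++ y) = (b :: x) ++ y from rfl, ih]
      show _ = (if a = s ∧ b = t then 1 else 0) + cf2 s t (b :: x) + bnd s t (a :: b :: x) y + cf2 s t y
      rw [show bnd s t (a :: b :: x) y = bnd s t (b :: x) y by simp [bnd, List.getLast?_cons_cons]]
      omega

lemma countFactor_two (s t : Step) (w : List Step) :
    countFactor [s, t] w = cf2 s t w := by
  induction w with
  | nil => simp [countFactor, cf2, List.isPrefixOf]
  | cons a l ih =>
    rw [countFactor, List.tails_cons, List.countP_cons, ← countFactor, ih]
    cases l with
    | nil => simp [cf2, List.isPrefixOf]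
    | cons b l' =>
      have hiff : ([s,t].isPrefixOf (a :: b :: l') = true) ↔ (s = a ∧ t = b) := by
        simp [List.isPrefixOf]
      by_cases h : s = a ∧ t = b
      · rw [if_pos (hiff.mpr h)]
        simp only [cf2]
        rw [if_pos ⟨h.1.symm, h.2.symm⟩]
        omega
      · rw [if_neg (fun hh => h (hiff.mp hh))]
        simp only [cf2]
        rw [if_neg (fun hh : a = s ∧ b = t => h ⟨hh.1.symm, hh.2.symm⟩)]
        omega

lemma countFactor_one (w : List Step) : countFactor [F] w = w.count F := by
  induction w with
  | nil => simp [countFactor, List.isPrefixOf]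
  | cons a l ih =>
    rw [countFactor, List.tails_cons, List.countP_cons, ← countFactor, ih, List.count_cons]
    have hiff : ([F].isPrefixOf (a :: l) = true) ↔ (F = a) := by
      simp [List.isPrefixOf]
    by_cases h : F = a
    · rw [if_pos (hiff.mpr h), if_pos (beq_iff_eq.mpr h.symm)]
    · rw [if_neg (fun hh => h (hiff.mp hh)), if_neg (fun hh => h (beq_iff_eq.mp hh).symm)]

lemma dh_last {w : List Step} (h : DH w) (hne : w ≠ []) : w.getLast? = some D := by
  induction h with
  | nil => exact absurd rfl hne
  | cons α β hα hβ hh ihα ihβ =>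
    by_cases hb : β = []
    · subst hb
      rw [show U :: (α ++ [D] ++ []) = (U :: α) ++ [D] by simp]
      exact List.getLast?_concat
    · rw [show U :: (α ++ [D] ++ β) = (U :: (α ++ [D])) ++ β by simp,
        List.getLast?_append, ihβ hb]
      rfl

lemma dh_head {w : List Step} (h : DH w) (hne : w ≠ []) : w.head? = some U := by
  cases h with
  | nil => exact absurd rfl hne
  | cons α β hα hβ hh => rfl

lemma phi_nil_iff {P m : List Step} (h : Phi P m) : P = [] ↔ m = [] := by
  cases h with
  | nil => simp
  | flat α a hα hφ => simp
  | up α β γ a b c h1 h2 h3 h4 h5 h6 => simp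

lemma phi_last {P m : List Step} (h : Phi P m) : m.getLast? ≠ some U := by
  cases h with
  | nil => simp
  | flat α a hα hφ => rw [List.getLast?_concat]; simp
  | up α β γ a b c h1 h2 h3 h4 h5 h6 =>
    rw [show a ++ c ++ U :: (b ++ [D]) = (a ++ c ++ U :: b) ++ [D] by simp,
      List.getLast?_concat]
    simp

lemma phi_head {P m : List Step} (h : Phi P m) : m.head? ≠ some D := by
  induction h with
  | nil => simp
  | flat α a hα hφ ih =>
    cases a with
    | nil => simp
    | cons x a' =>
      rw [show (x :: a') ++ [F] = x :: (a' ++ [F]) from rfl]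
      exact fun hc => ih hc
  | up α β γ a b c h1 h2 h3 h4 h5 h6 iha ihb ihc =>
    cases a with
    | nil =>
      cases c with
      | nil => simp
      | cons x c' =>
        rw [show [] ++ (x :: c') ++ U :: (b ++ [D]) = x :: (c' ++ U :: (b ++ [D])) from rfl]
        exact fun hc => ihc hc
    | cons x a' =>
      rw [show (x :: a') ++ c ++ U :: (b ++ [D]) = x :: (a' ++ (c ++ U :: (b ++ [D]))) by simp]
      exact fun hc => iha hc

lemma bnd_head_ne {s t : Step} {x y : List Step} (hy : y.head? ≠ some t) :
    bnd s t x y = 0 := by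
  rw [bnd, if_neg]
  exact fun hc => hy hc.2

lemma bnd_last_ne {s t : Step} {x y : List Step} (hx : x.getLast? ≠ some s) :
    bnd s t x y = 0 := by
  rw [bnd, if_neg]
  exact fun hc => hx hc.1

lemma key {P m : List Step} (h : Phi P m) :
    cf2 U D P = m.count F + cf2 U D m := by
  induction h with
  | nil => simp [cf2]
  | flat α a hα hφ ih =>
    rw [cf2_append, cf2_append, ih]
    rw [bnd_head_ne (by simp : ([U,D] : List Step).head? ≠ some D),
        bnd_head_ne (by simp : ([F] : List Step).head? ≠ some D)]
    simp [cf2, List.count_append]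
    omega
  | up α β γ a b c hdα hdβ hdγ hφa hφb hφc iha ihb ihc =>
    -- left side
    have hβlast : bnd U D β ([D] ++ (γ ++ [D])) = 0 := by
      apply bnd_last_ne
      by_cases hb : β = []
      · subst hb; simp
      · rw [dh_last hdβ hb]; simp
    have hγlast : bnd U D γ [D] = 0 := by
      apply bnd_last_ne
      by_cases hg : γ = []
      · subst hg; simp
      · rw [dh_last hdγ hg]; simp
    have hL : cf2 U D (α ++ [U, U] ++ β ++ [D] ++ γ ++ [D]) =
        cf2 U D α + cf2 U D β + cf2 U D γ + (if β = [] then 1 else 0) := by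
      rw [show α ++ [U, U] ++ β ++ [D] ++ γ ++ [D] =
          α ++ ([U] ++ ([U] ++ (β ++ ([D] ++ (γ ++ [D]))))) by simp]
      rw [cf2_append, cf2_append, cf2_append, cf2_append, cf2_append, cf2_append]
      rw [bnd_head_ne (show ([U] ++ ([U] ++ (β ++ ([D] ++ (γ ++ [D]))))).head? ≠ some D by simp)]
      rw [bnd_head_ne (show ([U] ++ (β ++ ([D] ++ (γ ++ [D])))).head? ≠ some D by simp)]
      rw [hβlast, hγlast]
      rw [bnd_last_ne (show ([D] : List Step).getLast? ≠ some U by simp)]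
      have hmid : bnd U D [U] (β ++ ([D] ++ (γ ++ [D]))) = if β = [] then 1 else 0 := by
        by_cases hb : β = []
        · subst hb; simp [bnd]
        · rw [if_neg hb, bnd, if_neg]
          rw [List.head?_append, dh_head hdβ hb]
          simp
      rw [hmid]
      simp [cf2]
      omega
    -- right side
    have hac : bnd U D a (c ++ U :: (b ++ [D])) = 0 := by
      apply bnd_head_ne
      rw [List.head?_append]
      by_cases hc : c = []
      · subst hc; simp
      · cases c with
        | nil => exact absurd rfl hc
        | cons x c' =>
          intro hcon
          exact phi_head hφc (by simpa using hcon)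
    have hcU : bnd U D c (U :: (b ++ [D])) = 0 := by
      apply bnd_head_ne; simp
    have hUb : bnd U D [U] (b ++ [D]) = if b = [] then 1 else 0 := by
      by_cases hb : b = []
      · subst hb; simp [bnd]
      · rw [if_neg hb, bnd, if_neg]
        rw [List.head?_append]
        cases b with
        | nil => exact absurd rfl hb
        | cons x b' =>
          intro hcon
          exact phi_head hφb (by simpa using hcon)
    have hbD : bnd U D b [D] = 0 := by
      apply bnd_last_ne
      exact phi_last hφb
    have hR : cf2 U D (a ++ c ++ U :: (b ++ [D])) =
        cf2 U D a + cf2 U D c + cf2 U D b + (if b = [] then 1 else 0) := by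
      rw [show a ++ c ++ U :: (b ++ [D]) = a ++ (c ++ ([U] ++ (b ++ [D]))) by simp]
      rw [cf2_append, cf2_append, cf2_append, cf2_append]
      rw [show bnd U D a (c ++ ([U] ++ (b ++ [D]))) = 0 from hac,
          show bnd U D c ([U] ++ (b ++ [D])) = 0 from hcU, hUb, hbD]
      simp [cf2]
      omega
    have heq : (if β = [] then (1:ℕ) else 0) = (if b = [] then 1 else 0) := by
      by_cases hb : β = []
      · rw [if_pos hb, if_pos ((phi_nil_iff hφb).mp hb)]
      · rw [if_neg hb, if_neg (fun hc => hb ((phi_nil_iff hφb).mpr hc))]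
    rw [hL, hR]
    have hcnt : (a ++ c ++ U :: (b ++ [D])).count F = a.count F + c.count F + b.count F := by
      simp [List.count_append, List.count_cons]
      omega
    rw [hcnt, iha, ihb, ihc, heq]
    omega

/-- φ transports the statistic UD: #UD(P) = #F(φP) + #UD(φP). -/
theorem stmt10 (n : ℕ) (P m : List Step) (hP : DH P) (hlen : P.length = 2 * n)
    (hphi : Phi P m) :
    countFactor [Step.U, Step.D] P =
      countFactor [Step.F] m + countFactor [Step.U, Step.D] m := by
  rw [countFactor_two, countFactor_two, countFactor_one]
  exact key hphi
end

section
/- For every n ≥ 0 and every P ∈ D_n^{h,≥}, the number of occurrences of the factor UUU in P equals m_{UF^+D}(φ(P)) + 2·(m_{UF^+U}(φ(P)) + m_{UU}(φ(P))), where m_{UF^+D} counts factors UF^kD (k ≥ 1), m_{UF^+U} counts factors UF^kU (k ≥ 1), and m_{UU} counts factors UU. -/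
open Step

/-! ### Auxiliary development -/

/-- `noUF r = true` iff the first non-`F` letter of `r` (if any) is not `U`. -/
def noUF : List Step → Bool
  | [] => true
  | F :: r => noUF r
  | U :: _ => false
  | D :: _ => true

/-- `x` has no suffix of the form `U F^j`. -/
def GoodM (x : List Step) : Prop := noUF x.reverse = true

/-- first non-F letter is not D -/
def fOK : List Step → Bool
  | [] => true
  | F :: r => fOK r
  | U :: _ => true
  | D :: _ => false

lemma noUF_repF_U (n : ℕ) (z : List Step) :
    noUF (List.replicate n F ++ U :: z) = false := by
  induction n with
  | zero => rfl
  | succ k ih => simpa [List.replicate_succ, noUF] using ih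

lemma noUF_dropLast (r : List Step) (h : Step) (hr : noUF (r ++ [h]) = true) :
    noUF r = true := by
  induction r with
  | nil => rfl
  | cons s t ih =>
    cases s with
    | U => simpa [noUF] using hr
    | D => rfl
    | F => exact ih (by simpa [noUF] using hr)

lemma goodM_tail {h : Step} {x : List Step} (g : GoodM (h :: x)) : GoodM x := by
  unfold GoodM at *
  rw [List.reverse_cons] at g
  exact noUF_dropLast _ _ g

lemma goodM_nil : GoodM ([] : List Step) := rfl

lemma goodM_snocD (s : List Step) : GoodM (s ++ [D]) := by
  unfold GoodM
  rw [List.reverse_append]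
  rfl

lemma goodM_snocF {x : List Step} (g : GoodM x) : GoodM (x ++ [F]) := by
  unfold GoodM at *
  rw [List.reverse_append]
  simpa [noUF] using g

lemma exists_nonF {x : List Step} (g : GoodM (U :: x)) : ∃ s ∈ x, s ≠ F := by
  by_contra hc
  push_neg at hc
  have hx : x = List.replicate x.length F := List.eq_replicate_length.mpr hc
  unfold GoodM at g
  rw [List.reverse_cons, hx, List.reverse_replicate] at g
  rw [show (List.replicate x.length F ++ [U]) = List.replicate x.length F ++ U :: [] from rfl,
    noUF_repF_U] at g
  exact absurd g (by simp)

lemma fThenD_append {x : List Step} (hx : ∃ s ∈ x, s ≠ F) (y : List Step) :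
    fThenD (x ++ y) = fThenD x := by
  induction x with
  | nil => simp at hx
  | cons s t ih =>
    cases s with
    | U => rfl
    | D => rfl
    | F =>
      have ht : ∃ s ∈ t, s ≠ F := by
        rcases hx with ⟨s, hs, hsF⟩
        rcases List.mem_cons.mp hs with rfl | h
        · exact absurd rfl hsF
        · exact ⟨s, h, hsF⟩
      cases t with
      | nil => simp at ht
      | cons s2 t2 =>
        cases s2 with
        | U => rfl
        | D => rfl
        | F =>
          show fThenD (F :: (F :: t2 ++ y)) = fThenD (F :: F :: t2)
          rw [show fThenD (F :: (F :: t2 ++ y)) = fThenD (F :: t2 ++ y) from rfl,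
            show fThenD (F :: F :: t2) = fThenD (F :: t2) from rfl]
          exact ih ht

lemma fThenU_append {x : List Step} (hx : ∃ s ∈ x, s ≠ F) (y : List Step) :
    fThenU (x ++ y) = fThenU x := by
  induction x with
  | nil => simp at hx
  | cons s t ih =>
    cases s with
    | U => rfl
    | D => rfl
    | F =>
      have ht : ∃ s ∈ t, s ≠ F := by
        rcases hx with ⟨s, hs, hsF⟩
        rcases List.mem_cons.mp hs with rfl | h
        · exact absurd rfl hsF
        · exact ⟨s, h, hsF⟩
      cases t with
      | nil => simp at ht
      | cons s2 t2 =>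
        cases s2 with
        | U => rfl
        | D => rfl
        | F =>
          show fThenU (F :: (F :: t2 ++ y)) = fThenU (F :: F :: t2)
          rw [show fThenU (F :: (F :: t2 ++ y)) = fThenU (F :: t2 ++ y) from rfl,
            show fThenU (F :: F :: t2) = fThenU (F :: t2) from rfl]
          exact ih ht
/-! ### counting infrastructure -/

def cnt (q : List Step → Bool) (w : List Step) : ℕ := w.tails.countP q

lemma cnt_cons (q : List Step → Bool) (h : Step) (w : List Step) :
    cnt q (h :: w) = cnt q w + if q (h :: w) then 1 else 0 := by
  unfold cnt
  rw [show (h::w).tails = (h::w) :: w.tails from by simp [List.tails], List.countP_cons]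

lemma cnt_nil (q : List Step → Bool) (hq : q [] = false) : cnt q [] = 0 := by
  unfold cnt
  simp [List.countP_cons, hq]

lemma cnt_append (q : List Step → Bool) (hnil : q [] = false)
    (hstab : ∀ (h : Step) (x y : List Step), GoodM (h :: x) → q (h :: (x ++ y)) = q (h :: x)) :
    ∀ x y : List Step, GoodM x → cnt q (x ++ y) = cnt q x + cnt q y := by
  intro x
  induction x with
  | nil => intro y _; simp [cnt_nil q hnil]
  | cons h t ih =>
    intro y g
    rw [List.cons_append, cnt_cons, cnt_cons, ih y (goodM_tail g), hstab h t y g]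
    omega

def pUU : List Step → Bool := fun t => [U,U].isPrefixOf t
def pUUU : List Step → Bool := fun t => [U,U,U].isPrefixOf t
def pUFD : List Step → Bool := fun t => match t with
  | U :: rest => fThenD rest
  | _ => false
def pUFU : List Step → Bool := fun t => match t with
  | U :: rest => fThenU rest
  | _ => false

lemma countFactor_UU (w : List Step) : countFactor [U,U] w = cnt pUU w := rfl
lemma countFactor_UUU (w : List Step) : countFactor [U,U,U] w = cnt pUUU w := rfl
lemma countUFD_eq (w : List Step) : countUFD w = cnt pUFD w := rfl
lemma countUFU_eq (w : List Step) : countUFU w = cnt pUFU w := rfl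

lemma stab_UU : ∀ (h : Step) (x y : List Step), GoodM (h :: x) → pUU (h :: (x ++ y)) = pUU (h :: x) := by
  intro h x y g
  cases h with
  | D => rfl
  | F => rfl
  | U =>
    cases x with
    | nil => exact absurd g (by simp [GoodM, noUF])
    | cons a t =>
      show [U,U].isPrefixOf (U :: a :: (t ++ y)) = [U,U].isPrefixOf (U :: a :: t)
      cases a <;> simp [List.isPrefixOf]

lemma stab_UUU : ∀ (h : Step) (x y : List Step), GoodM (h :: x) → pUUU (h :: (x ++ y)) = pUUU (h :: x) := by
  intro h x y g
  cases h with
  | D => rfl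
  | F => rfl
  | U =>
    cases x with
    | nil => exact absurd g (by simp [GoodM, noUF])
    | cons a t =>
      cases a with
      | D => rfl
      | F => rfl
      | U =>
        cases t with
        | nil => exact absurd g (by simp [GoodM, noUF])
        | cons b t2 =>
          show [U,U,U].isPrefixOf (U :: U :: b :: (t2 ++ y)) = [U,U,U].isPrefixOf (U :: U :: b :: t2)
          cases b <;> simp [List.isPrefixOf]

lemma stab_UFD : ∀ (h : Step) (x y : List Step), GoodM (h :: x) → pUFD (h :: (x ++ y)) = pUFD (h :: x) := by
  intro h x y g
  cases h with
  | D => rfl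
  | F => rfl
  | U =>
    show fThenD (x ++ y) = fThenD x
    exact fThenD_append (exists_nonF g) y

lemma stab_UFU : ∀ (h : Step) (x y : List Step), GoodM (h :: x) → pUFU (h :: (x ++ y)) = pUFU (h :: x) := by
  intro h x y g
  cases h with
  | D => rfl
  | F => rfl
  | U =>
    show fThenU (x ++ y) = fThenU x
    exact fThenU_append (exists_nonF g) y

lemma split_UU {x : List Step} (y : List Step) (g : GoodM x) :
    cnt pUU (x ++ y) = cnt pUU x + cnt pUU y :=
  cnt_append pUU rfl stab_UU x y g

lemma split_UUU {x : List Step} (y : List Step) (g : GoodM x) :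
    cnt pUUU (x ++ y) = cnt pUUU x + cnt pUUU y :=
  cnt_append pUUU rfl stab_UUU x y g

lemma split_UFD {x : List Step} (y : List Step) (g : GoodM x) :
    cnt pUFD (x ++ y) = cnt pUFD x + cnt pUFD y :=
  cnt_append pUFD rfl stab_UFD x y g

lemma split_UFU {x : List Step} (y : List Step) (g : GoodM x) :
    cnt pUFU (x ++ y) = cnt pUFU x + cnt pUFU y :=
  cnt_append pUFU rfl stab_UFU x y g
/-! ### DH structural lemmas -/

lemma DH_head {w : List Step} (h : DH w) : w = [] ∨ ∃ r, w = U :: r := by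
  cases h with
  | nil => exact Or.inl rfl
  | cons α β _ _ _ => exact Or.inr ⟨α ++ [D] ++ β, rfl⟩

lemma DH_snocD {w : List Step} (h : DH w) : w = [] ∨ ∃ s, w = s ++ [D] := by
  induction h with
  | nil => exact Or.inl rfl
  | cons α β hα hβ hh ihα ihβ =>
    rcases ihβ with rfl | ⟨s, rfl⟩
    · exact Or.inr ⟨U :: α, by simp⟩
    · exact Or.inr ⟨U :: (α ++ [D] ++ s), by simp⟩

lemma DH_goodM {w : List Step} (h : DH w) : GoodM w := by
  rcases DH_snocD h with rfl | ⟨s, rfl⟩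
  · exact goodM_nil
  · exact goodM_snocD s

lemma le_foldr_max (a : ℕ) (l : List ℕ) (h : a ∈ l) : a ≤ l.foldr max 0 := by
  induction l with
  | nil => simp at h
  | cons b t ih =>
    rcases List.mem_cons.mp h with rfl | h
    · exact le_max_left _ _
    · exact le_trans (ih h) (le_max_right _ _)

lemma height_ge_two {w : List Step} (h : ∃ r, w = U :: U :: r) : 2 ≤ height w := by
  rcases h with ⟨r, rfl⟩
  unfold height
  apply le_foldr_max
  refine List.mem_map.mpr ⟨[U, U], (List.mem_inits _ _).mpr ⟨r, rfl⟩, by decide⟩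

lemma noUU_low {w : List Step} (h : DH w) : height w ≤ 1 → cnt pUU w = 0 := by
  induction h with
  | nil => intro _; exact cnt_nil pUU rfl
  | cons α β hα hβ hh ihα ihβ =>
    intro hle
    rcases DH_head hα with rfl | ⟨r, rfl⟩
    · simp only [List.nil_append] at hh ⊢
      have h1 : height ([U, D] : List Step) = 1 := by decide
      have hβ1 : height β ≤ 1 := by omega
      have : cnt pUU β = 0 := ihβ hβ1
      rw [show (U :: ([D] ++ β)) = U :: D :: β from rfl]
      rw [cnt_cons, cnt_cons, this]
      norm_num
      constructor <;> rfl
    · exfalso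
      have h2 : 2 ≤ height (U :: (U :: r ++ [D] ++ β)) :=
        height_ge_two ⟨r ++ [D] ++ β, by simp⟩
      omega

lemma DH_shape {w : List Step} (h : DH w) :
    w = [] ∨ (∃ β₂, w = U :: D :: β₂ ∧ cnt pUU w = 0) ∨ (∃ r, w = U :: U :: r) := by
  cases h with
  | nil => exact Or.inl rfl
  | cons α β hα hβ hh =>
    rcases DH_head hα with rfl | ⟨r, rfl⟩
    · refine Or.inr (Or.inl ⟨β, by simp, ?_⟩)
      have h1 : height ([U, D] : List Step) = 1 := by decide
      have hβ1 : height β ≤ 1 := by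
        rw [show (U :: (([] : List Step) ++ [D])) = [U, D] from rfl] at hh
        omega
      have hb : cnt pUU β = 0 := noUU_low hβ hβ1
      rw [show (U :: ([] ++ [D] ++ β)) = U :: D :: β from rfl]
      rw [cnt_cons, cnt_cons, hb]
      norm_num
      constructor <;> rfl
    · exact Or.inr (Or.inr ⟨r ++ [D] ++ β, by simp⟩)
/-! ### Phi structural lemmas -/

lemma Phi_goodM {w m : List Step} (h : Phi w m) : GoodM m := by
  induction h with
  | nil => exact goodM_nil
  | flat α a _ _ ih => exact goodM_snocF ih
  | up α β γ a b c _ _ _ _ _ _ iha ihb ihc =>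
    rw [show (a ++ c ++ U :: (b ++ [D])) = (a ++ c ++ U :: b) ++ [D] from by simp]
    exact goodM_snocD _

lemma fOK_append {x y : List Step} (hx : fOK x = true) (hy : fOK y = true) :
    fOK (x ++ y) = true := by
  induction x with
  | nil => simpa using hy
  | cons s t ih =>
    cases s with
    | U => rfl
    | D => exact absurd hx (by simp [fOK])
    | F =>
      show fOK (t ++ y) = true
      exact ih hx

lemma Phi_fOK {w m : List Step} (h : Phi w m) : fOK m = true := by
  induction h with
  | nil => rfl
  | flat α a _ _ ih => exact fOK_append ih rfl
  | up α β γ a b c _ _ _ _ _ _ iha ihb ihc =>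
    exact fOK_append (fOK_append iha ihc) (rfl : fOK (U :: (b ++ [D])) = true)

lemma Phi_len {w m : List Step} (h : Phi w m) : w.length = 2 * m.length := by
  induction h with
  | nil => rfl
  | flat α a _ _ ih => simp only [List.length_append, List.length_cons, List.length_nil]; omega
  | up α β γ a b c _ _ _ _ _ _ iha ihb ihc =>
    simp only [List.length_append, List.length_cons, List.length_nil]; omega

lemma Phi_count {w m : List Step} (h : Phi w m) : m.count U = m.count D := by
  induction h with
  | nil => rfl
  | flat α a _ _ ih =>
    simp only [List.count_append, List.count_cons, List.count_nil]
    simp [ih]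
  | up α β γ a b c _ _ _ _ _ _ iha ihb ihc =>
    simp only [List.count_append, List.count_cons, List.count_nil]
    simp only [show ((D : Step) == U) = false from rfl, show ((U : Step) == U) = true from rfl,
      show ((D : Step) == D) = true from rfl, show ((U : Step) == D) = false from rfl]
    omega

lemma Phi_hasUU {w m : List Step} (h : Phi w m) : (0 < cnt pUU w ↔ U ∈ m) := by
  induction h with
  | nil =>
    rw [cnt_nil pUU rfl]
    simp
  | flat α a hα _ ih =>
    rw [split_UU [U, D] (DH_goodM hα)]
    have h2 : cnt pUU [U, D] = 0 := by decide
    rw [h2]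
    simp only [List.mem_append]
    constructor
    · intro hlt
      exact Or.inl (ih.mp (by omega))
    · intro hm
      rcases hm with hm | hm
      · have := ih.mpr hm; omega
      · simp at hm
  | up α β γ a b c hα _ _ _ _ _ iha ihb ihc =>
    constructor
    · intro _
      simp
    · intro _
      simp only [List.append_assoc, List.cons_append, List.nil_append]
      rw [split_UU _ (DH_goodM hα), cnt_cons]
      rw [show pUU (U :: U :: (β ++ D :: (γ ++ [D]))) = true from by simp [pUU, List.isPrefixOf]]
      simp
/-! ### replicate lemmas -/

lemma fThenD_repD (k : ℕ) (hk : 1 ≤ k) (z : List Step) :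
    fThenD (List.replicate k F ++ D :: z) = true := by
  induction k with
  | zero => omega
  | succ n ih =>
    cases n with
    | zero => rfl
    | succ m =>
      rw [List.replicate_succ, List.cons_append]
      rw [show fThenD (F :: (List.replicate (m+1) F ++ D :: z)) =
        fThenD (List.replicate (m+1) F ++ D :: z) from by
          rw [List.replicate_succ, List.cons_append]; rfl]
      exact ih (by omega)

lemma fThenU_repD (k : ℕ) (z : List Step) :
    fThenU (List.replicate k F ++ D :: z) = false := by
  induction k with
  | zero => rfl
  | succ n ih =>
    cases n with
    | zero => rfl
    | succ m =>
      rw [List.replicate_succ, List.cons_append]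
      rw [show fThenU (F :: (List.replicate (m+1) F ++ D :: z)) =
        fThenU (List.replicate (m+1) F ++ D :: z) from by
          rw [List.replicate_succ, List.cons_append]; rfl]
      exact ih

lemma fThenD_repU (k : ℕ) (z : List Step) :
    fThenD (List.replicate k F ++ U :: z) = false := by
  induction k with
  | zero => rfl
  | succ n ih =>
    cases n with
    | zero => rfl
    | succ m =>
      rw [List.replicate_succ, List.cons_append]
      rw [show fThenD (F :: (List.replicate (m+1) F ++ U :: z)) =
        fThenD (List.replicate (m+1) F ++ U :: z) from by
          rw [List.replicate_succ, List.cons_append]; rfl]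
      exact ih

lemma fThenU_repU (k : ℕ) (hk : 1 ≤ k) (z : List Step) :
    fThenU (List.replicate k F ++ U :: z) = true := by
  induction k with
  | zero => omega
  | succ n ih =>
    cases n with
    | zero => rfl
    | succ m =>
      rw [List.replicate_succ, List.cons_append]
      rw [show fThenU (F :: (List.replicate (m+1) F ++ U :: z)) =
        fThenU (List.replicate (m+1) F ++ U :: z) from by
          rw [List.replicate_succ, List.cons_append]; rfl]
      exact ih (by omega)

lemma firstU {b : List Step} (hok : fOK b = true) (hU : U ∈ b) :
    ∃ k rest, b = List.replicate k F ++ U :: rest := by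
  induction b with
  | nil => simp at hU
  | cons s t ih =>
    cases s with
    | U => exact ⟨0, t, rfl⟩
    | D => exact absurd hok (by simp [fOK])
    | F =>
      have hU' : U ∈ t := by
        rcases List.mem_cons.mp hU with h | h
        · exact absurd h.symm (by simp)
        · exact h
      rcases ih hok hU' with ⟨k, rest, rfl⟩
      exact ⟨k + 1, rest, by rw [List.replicate_succ, List.cons_append]⟩

lemma allF {b : List Step} (h : ∀ s ∈ b, s = F) : b = List.replicate b.length F :=
  List.eq_replicate_length.mpr h
/-! ### main -/

theorem aux {w m : List Step} (h : Phi w m) :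
    cnt pUUU w = cnt pUFD m + 2 * (cnt pUFU m + cnt pUU m) := by
  induction h with
  | nil => rw [cnt_nil pUUU rfl, cnt_nil pUFD rfl, cnt_nil pUFU rfl, cnt_nil pUU rfl]
  | flat α a hα pα ih =>
    rw [split_UUU [U, D] (DH_goodM hα), split_UFD [F] (Phi_goodM pα),
      split_UFU [F] (Phi_goodM pα), split_UU [F] (Phi_goodM pα)]
    have h1 : cnt pUUU [U, D] = 0 := by decide
    have h2 : cnt pUFD [F] = 0 := by decide
    have h3 : cnt pUFU [F] = 0 := by decide
    have h4 : cnt pUU [F] = 0 := by decide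
    rw [h1, h2, h3, h4]
    omega
  | up α β γ a b c hα hβ hγ pα pβ pγ iha ihb ihc =>
    have gβ := DH_goodM hβ
    have gγ := DH_goodM hγ
    have gb := Phi_goodM pβ
    simp only [List.append_assoc, List.cons_append, List.nil_append]
    rw [split_UUU _ (DH_goodM hα), cnt_cons pUUU U, cnt_cons pUUU U,
      split_UUU _ gβ, cnt_cons pUUU D, split_UUU [D] gγ]
    rw [split_UFD _ (Phi_goodM pα), split_UFD _ (Phi_goodM pγ), cnt_cons pUFD U,
      split_UFD [D] gb]
    rw [split_UFU _ (Phi_goodM pα), split_UFU _ (Phi_goodM pγ), cnt_cons pUFU U,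
      split_UFU [D] gb]
    rw [split_UU _ (Phi_goodM pα), split_UU _ (Phi_goodM pγ), cnt_cons pUU U,
      split_UU [D] gb]
    have z1 : cnt pUUU [D] = 0 := by decide
    have z2 : cnt pUFD [D] = 0 := by decide
    have z3 : cnt pUFU [D] = 0 := by decide
    have z4 : cnt pUU [D] = 0 := by decide
    have zD : pUUU (D :: (γ ++ [D])) = false := rfl
    rw [z1, z2, z3, z4, zD]
    rcases DH_shape hβ with rfl | ⟨β₂, rfl, hUUβ⟩ | ⟨r, rfl⟩
    · -- β = []
      have hb0 : b = [] := by
        have h := Phi_len pβ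
        simp only [List.length_nil] at h
        exact List.length_eq_zero_iff.mp (by omega)
      subst hb0
      simp only [List.nil_append]
      have e1 : pUUU (U :: U :: D :: (γ ++ [D])) = false := rfl
      have e2 : pUUU (U :: D :: (γ ++ [D])) = false := rfl
      have x1 : pUFD (U :: [D]) = false := rfl
      have x2 : pUFU (U :: [D]) = false := rfl
      have x3 : pUU (U :: [D]) = false := rfl
      simp only [e1, e2, x1, x2, x3,
        cnt_nil pUUU rfl, cnt_nil pUFD rfl, cnt_nil pUFU rfl, cnt_nil pUU rfl]
      norm_num
      omega
    · -- β = U :: D :: β₂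
      have hUb : U ∉ b := fun hU => by
        have h0 := (Phi_hasUU pβ).mpr hU
        omega
      have hDb : D ∉ b := by
        intro hD
        have h1 : b.count U = 0 := List.count_eq_zero.mpr hUb
        have h2 := Phi_count pβ
        have h3 : b.count D = 0 := by omega
        exact (List.count_eq_zero.mp h3) hD
      have hall : ∀ s ∈ b, s = F := by
        intro s hs
        cases s with
        | U => exact absurd hs hUb
        | D => exact absurd hs hDb
        | F => rfl
      have hb : b = List.replicate b.length F := allF hall
      have hk : 1 ≤ b.length := by
        have := Phi_len pβ
        simp only [List.length_cons] at this
        omega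
      have x1 : pUFD (U :: (b ++ [D])) = true := by
        show fThenD (b ++ [D]) = true
        rw [hb]
        exact fThenD_repD b.length hk []
      have x2 : pUFU (U :: (b ++ [D])) = false := by
        show fThenU (b ++ [D]) = false
        rw [hb]
        exact fThenU_repD b.length []
      have x3 : pUU (U :: (b ++ [D])) = false := by
        obtain ⟨j, hj⟩ : ∃ j, b.length = j + 1 := ⟨b.length - 1, by omega⟩
        rw [hb, hj, List.replicate_succ]
        simp [pUU, List.isPrefixOf]
      have e1 : pUUU (U :: U :: (U :: D :: β₂ ++ D :: (γ ++ [D]))) = true := by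
        simp [pUUU, List.isPrefixOf]
      have e2 : pUUU (U :: (U :: D :: β₂ ++ D :: (γ ++ [D]))) = false := rfl
      simp only [e1, e2, x1, x2, x3]
      norm_num
      omega
    · -- β = U :: U :: r
      have hUb : U ∈ b := by
        apply (Phi_hasUU pβ).mp
        rw [cnt_cons]
        have hp : pUU (U :: U :: r) = true := by simp [pUU, List.isPrefixOf]
        rw [hp]
        simp
      obtain ⟨k, rest, hb⟩ := firstU (Phi_fOK pβ) hUb
      have e1 : pUUU (U :: U :: (U :: U :: r ++ D :: (γ ++ [D]))) = true := by
        simp [pUUU, List.isPrefixOf]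
      have e2 : pUUU (U :: (U :: U :: r ++ D :: (γ ++ [D]))) = true := by
        simp [pUUU, List.isPrefixOf]
      have hbD : b ++ [D] = List.replicate k F ++ U :: (rest ++ [D]) := by
        rw [hb]; simp
      have x1 : pUFD (U :: (b ++ [D])) = false := by
        show fThenD (b ++ [D]) = false
        rw [hbD]
        exact fThenD_repU k _
      cases k with
      | zero =>
        have x2 : pUFU (U :: (b ++ [D])) = false := by
          show fThenU (b ++ [D]) = false
          rw [hbD]
          rfl
        have x3 : pUU (U :: (b ++ [D])) = true := by
          rw [hbD]
          simp [pUU, List.isPrefixOf]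
        simp only [e1, e2, x1, x2, x3]
        norm_num
        omega
      | succ j =>
        have x2 : pUFU (U :: (b ++ [D])) = true := by
          show fThenU (b ++ [D]) = true
          rw [hbD]
          exact fThenU_repU (j + 1) (by omega) _
        have x3 : pUU (U :: (b ++ [D])) = false := by
          rw [hbD, List.replicate_succ]
          simp [pUU, List.isPrefixOf]
        simp only [e1, e2, x1, x2, x3]
        norm_num
        omega



/-- φ transports UUU: #UUU(P) = #UF⁺D(φP) + 2(#UF⁺U(φP) + #UU(φP)). -/
theorem stmt14 (n : ℕ) (P m : List Step) (hP : DH P) (hlen : P.length = 2 * n)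
    (hphi : Phi P m) :
    countFactor [Step.U, Step.U, Step.U] P =
      countUFD m + 2 * (countUFU m + countFactor [Step.U, Step.U] m) := by
  rw [countFactor_UUU, countUFD_eq, countUFU_eq, countFactor_UU]
  exact aux hphi
end
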